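/- arXiv:1512.00779 — 5 statements merged into one kernel-verified Lean document; each statement's English description precedes it below -/
import Mathlib

section
/- For every positive integer k, there exists a set of 2k dipole words, each of length 6k+14, that attractively encodes the canonical signed 2k-glue function (i.e., a length-(6k+14) dipole code attractively encoding it). -/
/-- The alphabet Σ = {0, 1, ⋄} of dipole letters. -/
inductive Dip : Type
  | zero : Dip
  | one : Dip
  | blank : Dip
  deriving DecidableEq

open Dip

/-- The force between a pair of letters: 1 if {x,y} = {0,1}, -1 if x = y ∈ {0,1}, 0 otherwise. -/
def lf : Dip → Dip → ℤ
  | zero, one => 1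
  | one, zero => 1
  | zero, zero => -1
  | one, one => -1
  | _, _ => 0

/-- The force between a pair of equal-length words: the sum of letterwise forces. -/
def force (X Y : List Dip) : ℤ := (List.zipWith lf X Y).sum

/-- The length-`i` suffix of a word. -/
def sufx (X : List Dip) (i : ℕ) : List Dip := X.drop (X.length - i)

/-- A pair of equal-length words `X`, `Y` is aligned provided `f(X,Y) ≤ 0` and all proper
prefix/suffix overlaps with `Y` and its reverse have non-positive force. -/
def aligned (X Y : List Dip) : Prop :=
  force X Y ≤ 0 ∧
    ∀ A ∈ [Y, Y.reverse], ∀ i, 1 ≤ i → i ≤ X.length - 1 →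
      force (X.take i) (sufx A i) ≤ 0 ∧ force (sufx X i) (A.take i) ≤ 0

/-- The words `W 1, …, W k` attractively encode the `k`-glue function `g`: every pair is
aligned and `f(Wᵢ, Rev(Wⱼ)) > 0` iff `g i j > 0`. -/
def attEncodes (k : ℕ) (W : ℕ → List Dip) (g : ℕ → ℕ → ℤ) : Prop :=
  (∀ i ∈ Finset.Icc 1 k, ∀ j ∈ Finset.Icc 1 k, aligned (W i) (W j)) ∧
    ∀ i ∈ Finset.Icc 1 k, ∀ j ∈ Finset.Icc 1 k,
      (0 < force (W i) ((W j).reverse) ↔ 0 < g i j)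

-- The canonical signed `2k`-glue function: `g i j = 1` if `{i,j} = {2a-1, 2a}` for some
-- `a ∈ {1,…,k}`, and `0` otherwise.
open Classical in
noncomputable def signedGlue (k : ℕ) (i j : ℕ) : ℤ :=
  if ∃ a ∈ Finset.Icc 1 k, (i = 2 * a - 1 ∧ j = 2 * a) ∨ (i = 2 * a ∧ j = 2 * a - 1)
  then 1 else 0

-- ===================== auxiliary =====================

def val : Dip → ℤ
  | zero => 1
  | one => -1
  | blank => 0

lemma lf_val (x y : Dip) : lf x y = -(val x * val y) := by cases x <;> cases y <;> rfl

lemma lf_comm (x y : Dip) : lf x y = lf y x := by cases x <;> cases y <;> rfl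

def mkw (n : ℕ) (f : ℕ → Dip) : List Dip := (List.range n).map f

lemma length_mkw (n : ℕ) (f : ℕ → Dip) : (mkw n f).length = n := by simp [mkw]

lemma mkw_congr {n : ℕ} {f g : ℕ → Dip} (h : ∀ j, j < n → f j = g j) : mkw n f = mkw n g := by
  unfold mkw
  apply List.map_congr_left
  intro j hj
  exact h j (List.mem_range.mp hj)

lemma reverse_mkw (n : ℕ) (f : ℕ → Dip) :
    (mkw n f).reverse = mkw n (fun j => f (n - 1 - j)) := by
  apply List.ext_getElem
  · simp [mkw]
  · intro i h1 h2
    simp only [mkw, List.length_map, List.length_range] at h1 h2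
    simp only [mkw, List.getElem_reverse, List.getElem_map, List.getElem_range,
      List.length_map, List.length_range]

lemma take_mkw (n i : ℕ) (hi : i ≤ n) (f : ℕ → Dip) : (mkw n f).take i = mkw i f := by
  apply List.ext_getElem
  · simp [mkw]; omega
  · intro j h1 h2
    simp [mkw, List.getElem_take]

lemma sufx_mkw (n i : ℕ) (hi : i ≤ n) (f : ℕ → Dip) :
    sufx (mkw n f) i = mkw i (fun j => f (n - i + j)) := by
  unfold sufx
  apply List.ext_getElem
  · simp [mkw]; omega
  · intro j h1 h2
    simp only [mkw, List.length_drop, List.length_map, List.length_range] at h1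
    simp only [mkw, List.getElem_drop, List.getElem_map, List.getElem_range,
      List.length_map, List.length_range]

lemma list_range_sum (n : ℕ) (h : ℕ → ℤ) :
    ((List.range n).map h).sum = ∑ j ∈ Finset.range n, h j := by
  induction n with
  | zero => simp
  | succ n ih => rw [List.range_succ, Finset.sum_range_succ]; simp [ih]

lemma force_mkw (n : ℕ) (φ ψ : ℕ → Dip) :
    force (mkw n φ) (mkw n ψ) = ∑ j ∈ Finset.range n, lf (φ j) (ψ j) := by
  unfold force mkw
  rw [List.zipWith_map, List.zipWith_self, list_range_sum]


def indI (c d : ℤ) (p : ℕ) : ℤ := if c ≤ (p:ℤ) ∧ (p:ℤ) < d then 1 else 0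
def indP (q : ℤ) (p : ℕ) : ℤ := if (p:ℤ) = q then 1 else 0

lemma sumII (t s : ℕ) (c d c' d' : ℤ) :
    (∑ j ∈ Finset.range t, indI c d (j + s) * indI c' d' j)
      = max 0 (min (min (d - s) d') (t:ℤ) - max (c - s) (max c' 0)) := by
  induction t with
  | zero => simp only [Finset.range_zero, Finset.sum_empty, Nat.cast_zero]; omega
  | succ t ih =>
    rw [Finset.sum_range_succ, ih]
    unfold indI
    split_ifs <;> push_cast <;> omega

lemma sumIP (t s : ℕ) (c d q : ℤ) :
    (∑ j ∈ Finset.range t, indI c d (j + s) * indP q j)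
      = if 0 ≤ q ∧ q < (t:ℤ) ∧ c ≤ q + s ∧ q + s < d then 1 else 0 := by
  induction t with
  | zero => simp only [Finset.range_zero, Finset.sum_empty, Nat.cast_zero]; omega
  | succ t ih =>
    rw [Finset.sum_range_succ, ih]
    unfold indI indP
    split_ifs <;> push_cast at * <;> omega

lemma sumPI (t s : ℕ) (q c d : ℤ) :
    (∑ j ∈ Finset.range t, indP q (j + s) * indI c d j)
      = if (s:ℤ) ≤ q ∧ q < (t:ℤ) + s ∧ c ≤ q - s ∧ q - s < d then 1 else 0 := by
  induction t with
  | zero => simp only [Finset.range_zero, Finset.sum_empty, Nat.cast_zero]; omega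
  | succ t ih =>
    rw [Finset.sum_range_succ, ih]
    unfold indI indP
    split_ifs <;> push_cast at * <;> omega

lemma sumPP (t s : ℕ) (q r : ℤ) :
    (∑ j ∈ Finset.range t, indP q (j + s) * indP r j)
      = if q = r + s ∧ 0 ≤ r ∧ r < (t:ℤ) then 1 else 0 := by
  induction t with
  | zero => simp only [Finset.range_zero, Finset.sum_empty, Nat.cast_zero]; omega
  | succ t ih =>
    rw [Finset.sum_range_succ, ih]
    unfold indP
    split_ifs <;> push_cast at * <;> omega

lemma master (t s : ℕ) (u v : ℕ → ℤ) (c1 d1 q1 e1 c1' d1' c2 d2 q2 e2 c2' d2' : ℤ)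
    (hu : ∀ p, p < t + s → u p = indI c1 d1 p + e1 * indP q1 p + indI c1' d1' p)
    (hv : ∀ p, p < t → v p = indI c2 d2 p + e2 * indP q2 p + indI c2' d2' p) :
    (∑ j ∈ Finset.range t, u (j + s) * v j)
      = max 0 (min (min (d1 - s) d2) (t:ℤ) - max (c1 - s) (max c2 0))
      + max 0 (min (min (d1 - s) d2') (t:ℤ) - max (c1 - s) (max c2' 0))
      + max 0 (min (min (d1' - s) d2) (t:ℤ) - max (c1' - s) (max c2 0))
      + max 0 (min (min (d1' - s) d2') (t:ℤ) - max (c1' - s) (max c2' 0))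
      + e2 * (if 0 ≤ q2 ∧ q2 < (t:ℤ) ∧ c1 ≤ q2 + s ∧ q2 + s < d1 then 1 else 0)
      + e2 * (if 0 ≤ q2 ∧ q2 < (t:ℤ) ∧ c1' ≤ q2 + s ∧ q2 + s < d1' then 1 else 0)
      + e1 * (if (s:ℤ) ≤ q1 ∧ q1 < (t:ℤ) + s ∧ c2 ≤ q1 - s ∧ q1 - s < d2 then 1 else 0)
      + e1 * (if (s:ℤ) ≤ q1 ∧ q1 < (t:ℤ) + s ∧ c2' ≤ q1 - s ∧ q1 - s < d2' then 1 else 0)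
      + e1 * e2 * (if q1 = q2 + s ∧ 0 ≤ q2 ∧ q2 < (t:ℤ) then 1 else 0) := by
  have key : ∀ j ∈ Finset.range t, u (j + s) * v j =
      indI c1 d1 (j + s) * indI c2 d2 j
      + indI c1 d1 (j + s) * indI c2' d2' j
      + indI c1' d1' (j + s) * indI c2 d2 j
      + indI c1' d1' (j + s) * indI c2' d2' j
      + e2 * (indI c1 d1 (j + s) * indP q2 j)
      + e2 * (indI c1' d1' (j + s) * indP q2 j)
      + e1 * (indP q1 (j + s) * indI c2 d2 j)
      + e1 * (indP q1 (j + s) * indI c2' d2' j)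
      + e1 * e2 * (indP q1 (j + s) * indP q2 j) := by
    intro j hj
    rw [hu (j + s) (by simp at hj; omega), hv j (by simp at hj; omega)]
    ring
  rw [Finset.sum_congr rfl key]
  simp only [Finset.sum_add_distrib, ← Finset.mul_sum, sumII, sumIP, sumPI, sumPP]

def fX (k a p : ℕ) : Dip :=
  if p = 2*k+6+2*a then Dip.one
  else if 2*k+2 ≤ p ∧ p < 4*k+12 then Dip.zero
  else Dip.blank

def fY (k a p : ℕ) : Dip :=
  if p < 2*k+2 ∨ p = 4*k+7-2*a ∨ (4*k+12 ≤ p ∧ p < 6*k+10) then Dip.zero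
  else Dip.blank

def gX (k a p : ℕ) : Dip := fX k a (6*k+13-p)
def gY (k a p : ℕ) : Dip := fY k a (6*k+13-p)

lemma dX (k a : ℕ) (ha1 : 1 ≤ a) (ha2 : a ≤ k) (p : ℕ) :
    val (fX k a p) = indI (2*(k:ℤ)+2) (4*k+12) p + (-2) * indP (2*(k:ℤ)+6+2*a) p
      + indI 0 0 p := by
  unfold fX indI indP
  split_ifs <;> simp [val] <;> push_cast at * <;> omega

lemma dY (k b : ℕ) (hb1 : 1 ≤ b) (hb2 : b ≤ k) (p : ℕ) :
    val (fY k b p) = indI 0 (2*(k:ℤ)+2) p + 1 * indP (4*(k:ℤ)+7-2*b) p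
      + indI (4*(k:ℤ)+12) (6*k+10) p := by
  unfold fY indI indP
  split_ifs <;> simp [val] <;> push_cast at * <;> omega

lemma dXr (k a : ℕ) (ha1 : 1 ≤ a) (ha2 : a ≤ k) (p : ℕ) (hp : p < 6*k+14) :
    val (gX k a p) = indI (2*(k:ℤ)+2) (4*k+12) p + (-2) * indP (4*(k:ℤ)+7-2*a) p
      + indI 0 0 p := by
  unfold gX fX indI indP
  split_ifs <;> simp [val] <;> push_cast at * <;> omega

lemma dYr (k b : ℕ) (hb1 : 1 ≤ b) (hb2 : b ≤ k) (p : ℕ) (hp : p < 6*k+14) :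
    val (gY k b p) = indI (4*(k:ℤ)+12) (6*k+14) p + 1 * indP (2*(k:ℤ)+6+2*b) p
      + indI 4 (2*(k:ℤ)+2) p := by
  unfold gY fY indI indP
  split_ifs <;> simp [val] <;> push_cast at * <;> omega

def Tsum (n s : ℕ) (α β : ℕ → Dip) : ℤ := ∑ j ∈ Finset.range (n - s), lf (α (j + s)) (β j)

lemma Tsum_eq (n s : ℕ) (α β : ℕ → Dip) :
    Tsum n s α β = -∑ j ∈ Finset.range (n - s), val (α (j + s)) * val (β j) := by
  unfold Tsum
  rw [← Finset.sum_neg_distrib]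
  exact Finset.sum_congr rfl fun j _ => lf_val _ _


set_option maxHeartbeats 1000000 in
lemma famXX (k a b s : ℕ) (ha1 : 1 ≤ a) (ha2 : a ≤ k) (hb1 : 1 ≤ b) (hb2 : b ≤ k)
    (hs : s ≤ 6*k+14) : Tsum (6*k+14) s (fX k a) (fX k b) ≤ 0 := by
  rw [Tsum_eq, master (6*k+14-s) s _ _ (2*(k:ℤ)+2) (4*(k:ℤ)+12) (2*(k:ℤ)+6+2*(a:ℤ)) (-2) 0 0
      (2*(k:ℤ)+2) (4*(k:ℤ)+12) (2*(k:ℤ)+6+2*(b:ℤ)) (-2) 0 0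
      (fun p _ => dX k a ha1 ha2 p) (fun p _ => dX k b hb1 hb2 p)]
  have hcast : ((6*k+14-s : ℕ) : ℤ) = 6*(k:ℤ)+14-s := by omega
  rw [hcast]
  split_ifs <;> omega


set_option maxHeartbeats 1000000 in
lemma famXXr (k a b s : ℕ) (ha1 : 1 ≤ a) (ha2 : a ≤ k) (hb1 : 1 ≤ b) (hb2 : b ≤ k)
    (hs : s ≤ 6*k+14) : Tsum (6*k+14) s (fX k a) (gX k b) ≤ 0 := by
  rw [Tsum_eq, master (6*k+14-s) s _ _ (2*(k:ℤ)+2) (4*(k:ℤ)+12) (2*(k:ℤ)+6+2*(a:ℤ)) (-2) 0 0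
      (2*(k:ℤ)+2) (4*(k:ℤ)+12) (4*(k:ℤ)+7-2*(b:ℤ)) (-2) 0 0
      (fun p _ => dX k a ha1 ha2 p) (fun p hp => dXr k b hb1 hb2 p (by omega))]
  have hcast : ((6*k+14-s : ℕ) : ℤ) = 6*(k:ℤ)+14-s := by omega
  rw [hcast]
  split_ifs <;> omega


set_option maxHeartbeats 1000000 in
lemma famXrX (k a b s : ℕ) (ha1 : 1 ≤ a) (ha2 : a ≤ k) (hb1 : 1 ≤ b) (hb2 : b ≤ k)
    (hs : s ≤ 6*k+14) : Tsum (6*k+14) s (gX k b) (fX k a) ≤ 0 := by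
  rw [Tsum_eq, master (6*k+14-s) s _ _ (2*(k:ℤ)+2) (4*(k:ℤ)+12) (4*(k:ℤ)+7-2*(b:ℤ)) (-2) 0 0
      (2*(k:ℤ)+2) (4*(k:ℤ)+12) (2*(k:ℤ)+6+2*(a:ℤ)) (-2) 0 0
      (fun p hp => dXr k b hb1 hb2 p (by omega)) (fun p _ => dX k a ha1 ha2 p)]
  have hcast : ((6*k+14-s : ℕ) : ℤ) = 6*(k:ℤ)+14-s := by omega
  rw [hcast]
  split_ifs <;> omega


set_option maxHeartbeats 1000000 in
lemma famXY (k a b s : ℕ) (ha1 : 1 ≤ a) (ha2 : a ≤ k) (hb1 : 1 ≤ b) (hb2 : b ≤ k)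
    (hs : s ≤ 6*k+14) : Tsum (6*k+14) s (fX k a) (fY k b) ≤ 0 := by
  rw [Tsum_eq, master (6*k+14-s) s _ _ (2*(k:ℤ)+2) (4*(k:ℤ)+12) (2*(k:ℤ)+6+2*(a:ℤ)) (-2) 0 0
      0 (2*(k:ℤ)+2) (4*(k:ℤ)+7-2*(b:ℤ)) 1 (4*(k:ℤ)+12) (6*(k:ℤ)+10)
      (fun p _ => dX k a ha1 ha2 p) (fun p _ => dY k b hb1 hb2 p)]
  have hcast : ((6*k+14-s : ℕ) : ℤ) = 6*(k:ℤ)+14-s := by omega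
  rw [hcast]
  split_ifs <;> omega


set_option maxHeartbeats 1000000 in
lemma famYX (k a b s : ℕ) (ha1 : 1 ≤ a) (ha2 : a ≤ k) (hb1 : 1 ≤ b) (hb2 : b ≤ k)
    (hs : s ≤ 6*k+14) : Tsum (6*k+14) s (fY k b) (fX k a) ≤ 0 := by
  rw [Tsum_eq, master (6*k+14-s) s _ _ 0 (2*(k:ℤ)+2) (4*(k:ℤ)+7-2*(b:ℤ)) 1 (4*(k:ℤ)+12) (6*(k:ℤ)+10)
      (2*(k:ℤ)+2) (4*(k:ℤ)+12) (2*(k:ℤ)+6+2*(a:ℤ)) (-2) 0 0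
      (fun p _ => dY k b hb1 hb2 p) (fun p _ => dX k a ha1 ha2 p)]
  have hcast : ((6*k+14-s : ℕ) : ℤ) = 6*(k:ℤ)+14-s := by omega
  rw [hcast]
  split_ifs <;> omega


set_option maxHeartbeats 1000000 in
lemma famXYr (k a b s : ℕ) (ha1 : 1 ≤ a) (ha2 : a ≤ k) (hb1 : 1 ≤ b) (hb2 : b ≤ k)
    (hs : s ≤ 6*k+14) (hex : 1 ≤ s ∨ a ≠ b) : Tsum (6*k+14) s (fX k a) (gY k b) ≤ 0 := by
  rw [Tsum_eq, master (6*k+14-s) s _ _ (2*(k:ℤ)+2) (4*(k:ℤ)+12) (2*(k:ℤ)+6+2*(a:ℤ)) (-2) 0 0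
      (4*(k:ℤ)+12) (6*(k:ℤ)+14) (2*(k:ℤ)+6+2*(b:ℤ)) 1 4 (2*(k:ℤ)+2)
      (fun p _ => dX k a ha1 ha2 p) (fun p hp => dYr k b hb1 hb2 p (by omega))]
  have hcast : ((6*k+14-s : ℕ) : ℤ) = 6*(k:ℤ)+14-s := by omega
  rw [hcast]
  rcases hex with hex | hex <;> split_ifs <;> omega


set_option maxHeartbeats 1000000 in
lemma famYrX (k a b s : ℕ) (ha1 : 1 ≤ a) (ha2 : a ≤ k) (hb1 : 1 ≤ b) (hb2 : b ≤ k)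
    (hs : s ≤ 6*k+14) (hex : 1 ≤ s) : Tsum (6*k+14) s (gY k b) (fX k a) ≤ 0 := by
  rw [Tsum_eq, master (6*k+14-s) s _ _ (4*(k:ℤ)+12) (6*(k:ℤ)+14) (2*(k:ℤ)+6+2*(b:ℤ)) 1 4 (2*(k:ℤ)+2)
      (2*(k:ℤ)+2) (4*(k:ℤ)+12) (2*(k:ℤ)+6+2*(a:ℤ)) (-2) 0 0
      (fun p hp => dYr k b hb1 hb2 p (by omega)) (fun p _ => dX k a ha1 ha2 p)]
  have hcast : ((6*k+14-s : ℕ) : ℤ) = 6*(k:ℤ)+14-s := by omega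
  rw [hcast]
  split_ifs <;> omega


set_option maxHeartbeats 1000000 in
lemma famYXr (k a b s : ℕ) (ha1 : 1 ≤ a) (ha2 : a ≤ k) (hb1 : 1 ≤ b) (hb2 : b ≤ k)
    (hs : s ≤ 6*k+14) (hex : 1 ≤ s ∨ a ≠ b) : Tsum (6*k+14) s (fY k b) (gX k a) ≤ 0 := by
  rw [Tsum_eq, master (6*k+14-s) s _ _ 0 (2*(k:ℤ)+2) (4*(k:ℤ)+7-2*(b:ℤ)) 1 (4*(k:ℤ)+12) (6*(k:ℤ)+10)
      (2*(k:ℤ)+2) (4*(k:ℤ)+12) (4*(k:ℤ)+7-2*(a:ℤ)) (-2) 0 0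
      (fun p _ => dY k b hb1 hb2 p) (fun p hp => dXr k a ha1 ha2 p (by omega))]
  have hcast : ((6*k+14-s : ℕ) : ℤ) = 6*(k:ℤ)+14-s := by omega
  rw [hcast]
  rcases hex with hex | hex <;> split_ifs <;> omega


set_option maxHeartbeats 1000000 in
lemma famXrY (k a b s : ℕ) (ha1 : 1 ≤ a) (ha2 : a ≤ k) (hb1 : 1 ≤ b) (hb2 : b ≤ k)
    (hs : s ≤ 6*k+14) (hex : 1 ≤ s) : Tsum (6*k+14) s (gX k a) (fY k b) ≤ 0 := by
  rw [Tsum_eq, master (6*k+14-s) s _ _ (2*(k:ℤ)+2) (4*(k:ℤ)+12) (4*(k:ℤ)+7-2*(a:ℤ)) (-2) 0 0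
      0 (2*(k:ℤ)+2) (4*(k:ℤ)+7-2*(b:ℤ)) 1 (4*(k:ℤ)+12) (6*(k:ℤ)+10)
      (fun p hp => dXr k a ha1 ha2 p (by omega)) (fun p _ => dY k b hb1 hb2 p)]
  have hcast : ((6*k+14-s : ℕ) : ℤ) = 6*(k:ℤ)+14-s := by omega
  rw [hcast]
  split_ifs <;> omega


set_option maxHeartbeats 1000000 in
lemma famYY (k a b s : ℕ) (ha1 : 1 ≤ a) (ha2 : a ≤ k) (hb1 : 1 ≤ b) (hb2 : b ≤ k)
    (hs : s ≤ 6*k+14) : Tsum (6*k+14) s (fY k a) (fY k b) ≤ 0 := by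
  rw [Tsum_eq, master (6*k+14-s) s _ _ 0 (2*(k:ℤ)+2) (4*(k:ℤ)+7-2*(a:ℤ)) 1 (4*(k:ℤ)+12) (6*(k:ℤ)+10)
      0 (2*(k:ℤ)+2) (4*(k:ℤ)+7-2*(b:ℤ)) 1 (4*(k:ℤ)+12) (6*(k:ℤ)+10)
      (fun p _ => dY k a ha1 ha2 p) (fun p _ => dY k b hb1 hb2 p)]
  have hcast : ((6*k+14-s : ℕ) : ℤ) = 6*(k:ℤ)+14-s := by omega
  rw [hcast]
  split_ifs <;> omega


set_option maxHeartbeats 1000000 in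
lemma famYYr (k a b s : ℕ) (ha1 : 1 ≤ a) (ha2 : a ≤ k) (hb1 : 1 ≤ b) (hb2 : b ≤ k)
    (hs : s ≤ 6*k+14) : Tsum (6*k+14) s (fY k a) (gY k b) ≤ 0 := by
  rw [Tsum_eq, master (6*k+14-s) s _ _ 0 (2*(k:ℤ)+2) (4*(k:ℤ)+7-2*(a:ℤ)) 1 (4*(k:ℤ)+12) (6*(k:ℤ)+10)
      (4*(k:ℤ)+12) (6*(k:ℤ)+14) (2*(k:ℤ)+6+2*(b:ℤ)) 1 4 (2*(k:ℤ)+2)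
      (fun p _ => dY k a ha1 ha2 p) (fun p hp => dYr k b hb1 hb2 p (by omega))]
  have hcast : ((6*k+14-s : ℕ) : ℤ) = 6*(k:ℤ)+14-s := by omega
  rw [hcast]
  split_ifs <;> omega


set_option maxHeartbeats 1000000 in
lemma famYrY (k a b s : ℕ) (ha1 : 1 ≤ a) (ha2 : a ≤ k) (hb1 : 1 ≤ b) (hb2 : b ≤ k)
    (hs : s ≤ 6*k+14) : Tsum (6*k+14) s (gY k b) (fY k a) ≤ 0 := by
  rw [Tsum_eq, master (6*k+14-s) s _ _ (4*(k:ℤ)+12) (6*(k:ℤ)+14) (2*(k:ℤ)+6+2*(b:ℤ)) 1 4 (2*(k:ℤ)+2)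
      0 (2*(k:ℤ)+2) (4*(k:ℤ)+7-2*(a:ℤ)) 1 (4*(k:ℤ)+12) (6*(k:ℤ)+10)
      (fun p hp => dYr k b hb1 hb2 p (by omega)) (fun p _ => dY k a ha1 ha2 p)]
  have hcast : ((6*k+14-s : ℕ) : ℤ) = 6*(k:ℤ)+14-s := by omega
  rw [hcast]
  split_ifs <;> omega


set_option maxHeartbeats 1000000 in
lemma famXYr_pos (k a : ℕ) (ha1 : 1 ≤ a) (ha2 : a ≤ k) :
    0 < Tsum (6*k+14) 0 (fX k a) (gY k a) := by
  have ha1' := ha1; have ha2' := ha2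
  rw [Tsum_eq, master (6*k+14-0) 0 _ _ (2*(k:ℤ)+2) (4*(k:ℤ)+12) (2*(k:ℤ)+6+2*(a:ℤ)) (-2) 0 0
      (4*(k:ℤ)+12) (6*(k:ℤ)+14) (2*(k:ℤ)+6+2*(a:ℤ)) 1 4 (2*(k:ℤ)+2)
      (fun p _ => dX k a ha1 ha2 p) (fun p hp => dYr k a ha1 ha2 p (by omega))]
  have hcast : ((6*k+14-0 : ℕ) : ℤ) = 6*(k:ℤ)+14 := by omega
  rw [hcast]
  split_ifs <;> omega

set_option maxHeartbeats 1000000 in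
lemma famYXr_pos (k a : ℕ) (ha1 : 1 ≤ a) (ha2 : a ≤ k) :
    0 < Tsum (6*k+14) 0 (fY k a) (gX k a) := by
  rw [Tsum_eq, master (6*k+14-0) 0 _ _ 0 (2*(k:ℤ)+2) (4*(k:ℤ)+7-2*(a:ℤ)) 1 (4*(k:ℤ)+12) (6*(k:ℤ)+10)
      (2*(k:ℤ)+2) (4*(k:ℤ)+12) (4*(k:ℤ)+7-2*(a:ℤ)) (-2) 0 0
      (fun p _ => dY k a ha1 ha2 p) (fun p hp => dXr k a ha1 ha2 p (by omega))]
  have hcast : ((6*k+14-0 : ℕ) : ℤ) = 6*(k:ℤ)+14 := by omega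
  rw [hcast]
  split_ifs <;> omega

-- ===================== assembly =====================

lemma revXw (k a : ℕ) : (mkw (6*k+14) (fX k a)).reverse = mkw (6*k+14) (gX k a) := by
  rw [reverse_mkw]
  refine mkw_congr fun j hj => ?_
  unfold gX
  rw [show 6*k+14-1-j = 6*k+13-j by omega]

lemma revYw (k a : ℕ) : (mkw (6*k+14) (fY k a)).reverse = mkw (6*k+14) (gY k a) := by
  rw [reverse_mkw]
  refine mkw_congr fun j hj => ?_
  unfold gY
  rw [show 6*k+14-1-j = 6*k+13-j by omega]

lemma Tsum_full (n : ℕ) (φ ψ : ℕ → Dip) :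
    force (mkw n φ) (mkw n ψ) = Tsum n 0 φ ψ := by
  rw [force_mkw]
  unfold Tsum
  simp

lemma aligned_of (n : ℕ) (hn : 1 ≤ n) (φ ψ ψr : ℕ → Dip)
    (hrev : (mkw n ψ).reverse = mkw n ψr)
    (h1 : ∀ s, s ≤ n → Tsum n s φ ψ ≤ 0)
    (h2 : ∀ s, s ≤ n → Tsum n s ψ φ ≤ 0)
    (h3 : ∀ s, 1 ≤ s → s ≤ n → Tsum n s φ ψr ≤ 0)
    (h4 : ∀ s, 1 ≤ s → s ≤ n → Tsum n s ψr φ ≤ 0) :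
    aligned (mkw n φ) (mkw n ψ) := by
  have key : ∀ (χ : ℕ → Dip) (i : ℕ), i ≤ n →
      (force ((mkw n φ).take i) (sufx (mkw n χ) i) = Tsum n (n-i) χ φ ∧
       force (sufx (mkw n φ) i) ((mkw n χ).take i) = Tsum n (n-i) φ χ) := by
    intro χ i hin
    constructor
    · rw [take_mkw n i hin, sufx_mkw n i hin, force_mkw]
      unfold Tsum
      rw [show n - (n - i) = i by omega]
      refine Finset.sum_congr rfl fun j _ => ?_
      rw [lf_comm, show n - i + j = j + (n - i) by omega]
    · rw [sufx_mkw n i hin, take_mkw n i hin, force_mkw]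
      unfold Tsum
      rw [show n - (n - i) = i by omega]
      refine Finset.sum_congr rfl fun j _ => ?_
      rw [show n - i + j = j + (n - i) by omega]
  constructor
  · rw [Tsum_full]; exact h1 0 (by omega)
  · intro A hA i hi1 hi2
    rw [length_mkw] at hi2
    have hin : i ≤ n := by omega
    have hs1 : 1 ≤ n - i := by omega
    have hsn : n - i ≤ n := by omega
    simp only [List.mem_cons, List.not_mem_nil, or_false] at hA
    rcases hA with rfl | rfl
    · exact ⟨((key ψ i hin).1) ▸ h2 (n-i) hsn, ((key ψ i hin).2) ▸ h1 (n-i) hsn⟩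
    · rw [hrev]
      exact ⟨((key ψr i hin).1) ▸ h4 (n-i) hs1 hsn, ((key ψr i hin).2) ▸ h3 (n-i) hs1 hsn⟩

lemma glue_pos (k i j : ℕ) : (0 < signedGlue k i j) ↔
    ∃ a ∈ Finset.Icc 1 k, (i = 2 * a - 1 ∧ j = 2 * a) ∨ (i = 2 * a ∧ j = 2 * a - 1) := by
  unfold signedGlue
  split_ifs with h
  · exact iff_of_true (by norm_num) h
  · exact iff_of_false (by norm_num) h

/-- the dipole code -/
def Wrd (k i : ℕ) : List Dip :=
  if i % 2 = 1 then mkw (6*k+14) (fX k ((i+1)/2)) else mkw (6*k+14) (fY k (i/2))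

/-- For every positive integer `k`, there is a set of `2k` dipole words, each of length
`6k+14`, that attractively encodes the canonical signed `2k`-glue function. -/
theorem stmt0 (k : ℕ) (hk : 0 < k) :
    ∃ W : ℕ → List Dip,
      (∀ i ∈ Finset.Icc 1 (2 * k), (W i).length = 6 * k + 14) ∧
      attEncodes (2 * k) W (signedGlue k) := by
  have hn : 1 ≤ 6*k+14 := by omega
  refine ⟨Wrd k, ?_, ?_, ?_⟩
  · intro i _
    unfold Wrd
    split_ifs <;> rw [length_mkw]
  · -- aligned part
    intro i hi j hj
    rw [Finset.mem_Icc] at hi hj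
    by_cases hi2 : i % 2 = 1 <;> by_cases hj2 : j % 2 = 1
    · have e1 : Wrd k i = mkw (6*k+14) (fX k ((i+1)/2)) := by unfold Wrd; rw [if_pos hi2]
      have e2 : Wrd k j = mkw (6*k+14) (fX k ((j+1)/2)) := by unfold Wrd; rw [if_pos hj2]
      rw [e1, e2]
      exact aligned_of _ hn _ _ _ (revXw k ((j+1)/2))
        (fun s hs => famXX k ((i+1)/2) ((j+1)/2) s (by omega) (by omega) (by omega) (by omega) hs)
        (fun s hs => famXX k ((j+1)/2) ((i+1)/2) s (by omega) (by omega) (by omega) (by omega) hs)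
        (fun s _ hs => famXXr k ((i+1)/2) ((j+1)/2) s (by omega) (by omega) (by omega) (by omega) hs)
        (fun s _ hs => famXrX k ((i+1)/2) ((j+1)/2) s (by omega) (by omega) (by omega) (by omega) hs)
    · have e1 : Wrd k i = mkw (6*k+14) (fX k ((i+1)/2)) := by unfold Wrd; rw [if_pos hi2]
      have e2 : Wrd k j = mkw (6*k+14) (fY k (j/2)) := by unfold Wrd; rw [if_neg hj2]
      rw [e1, e2]
      exact aligned_of _ hn _ _ _ (revYw k (j/2))
        (fun s hs => famXY k ((i+1)/2) (j/2) s (by omega) (by omega) (by omega) (by omega) hs)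
        (fun s hs => famYX k ((i+1)/2) (j/2) s (by omega) (by omega) (by omega) (by omega) hs)
        (fun s hs1 hs => famXYr k ((i+1)/2) (j/2) s (by omega) (by omega) (by omega) (by omega) hs (Or.inl hs1))
        (fun s hs1 hs => famYrX k ((i+1)/2) (j/2) s (by omega) (by omega) (by omega) (by omega) hs hs1)
    · have e1 : Wrd k i = mkw (6*k+14) (fY k (i/2)) := by unfold Wrd; rw [if_neg hi2]
      have e2 : Wrd k j = mkw (6*k+14) (fX k ((j+1)/2)) := by unfold Wrd; rw [if_pos hj2]
      rw [e1, e2]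
      exact aligned_of _ hn _ _ _ (revXw k ((j+1)/2))
        (fun s hs => famYX k ((j+1)/2) (i/2) s (by omega) (by omega) (by omega) (by omega) hs)
        (fun s hs => famXY k ((j+1)/2) (i/2) s (by omega) (by omega) (by omega) (by omega) hs)
        (fun s hs1 hs => famYXr k ((j+1)/2) (i/2) s (by omega) (by omega) (by omega) (by omega) hs (Or.inl hs1))
        (fun s hs1 hs => famXrY k ((j+1)/2) (i/2) s (by omega) (by omega) (by omega) (by omega) hs hs1)
    · have e1 : Wrd k i = mkw (6*k+14) (fY k (i/2)) := by unfold Wrd; rw [if_neg hi2]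
      have e2 : Wrd k j = mkw (6*k+14) (fY k (j/2)) := by unfold Wrd; rw [if_neg hj2]
      rw [e1, e2]
      exact aligned_of _ hn _ _ _ (revYw k (j/2))
        (fun s hs => famYY k (i/2) (j/2) s (by omega) (by omega) (by omega) (by omega) hs)
        (fun s hs => famYY k (j/2) (i/2) s (by omega) (by omega) (by omega) (by omega) hs)
        (fun s _ hs => famYYr k (i/2) (j/2) s (by omega) (by omega) (by omega) (by omega) hs)
        (fun s _ hs => famYrY k (i/2) (j/2) s (by omega) (by omega) (by omega) (by omega) hs)
  · -- encoding part
    intro i hi j hj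
    rw [Finset.mem_Icc] at hi hj
    rw [glue_pos]
    by_cases hi2 : i % 2 = 1 <;> by_cases hj2 : j % 2 = 1
    · -- odd odd : both sides false
      have e1 : Wrd k i = mkw (6*k+14) (fX k ((i+1)/2)) := by unfold Wrd; rw [if_pos hi2]
      have e2 : Wrd k j = mkw (6*k+14) (fX k ((j+1)/2)) := by unfold Wrd; rw [if_pos hj2]
      rw [e1, e2, revXw, Tsum_full]
      have hf := famXXr k ((i+1)/2) ((j+1)/2) 0 (by omega) (by omega) (by omega) (by omega) (by omega)
      constructor
      · intro h; exact absurd h (not_lt.mpr hf)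
      · rintro ⟨c, hc, ⟨h1, h2⟩ | ⟨h1, h2⟩⟩ <;> (rw [Finset.mem_Icc] at hc; omega)
    · -- odd even
      have e1 : Wrd k i = mkw (6*k+14) (fX k ((i+1)/2)) := by unfold Wrd; rw [if_pos hi2]
      have e2 : Wrd k j = mkw (6*k+14) (fY k (j/2)) := by unfold Wrd; rw [if_neg hj2]
      rw [e1, e2, revYw, Tsum_full]
      by_cases hab : (i+1)/2 = j/2
      · rw [← hab]
        constructor
        · intro _
          exact ⟨(i+1)/2, Finset.mem_Icc.mpr ⟨by omega, by omega⟩, Or.inl ⟨by omega, by omega⟩⟩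
        · intro _
          exact famXYr_pos k ((i+1)/2) (by omega) (by omega)
      · have hf := famXYr k ((i+1)/2) (j/2) 0 (by omega) (by omega) (by omega) (by omega) (by omega) (Or.inr hab)
        constructor
        · intro h; exact absurd h (not_lt.mpr hf)
        · rintro ⟨c, hc, ⟨h1, h2⟩ | ⟨h1, h2⟩⟩ <;> (rw [Finset.mem_Icc] at hc; omega)
    · -- even odd
      have e1 : Wrd k i = mkw (6*k+14) (fY k (i/2)) := by unfold Wrd; rw [if_neg hi2]
      have e2 : Wrd k j = mkw (6*k+14) (fX k ((j+1)/2)) := by unfold Wrd; rw [if_pos hj2]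
      rw [e1, e2, revXw, Tsum_full]
      by_cases hab : (j+1)/2 = i/2
      · rw [show i/2 = (j+1)/2 from hab.symm]
        constructor
        · intro _
          exact ⟨(j+1)/2, Finset.mem_Icc.mpr ⟨by omega, by omega⟩, Or.inr ⟨by omega, by omega⟩⟩
        · intro _
          exact famYXr_pos k ((j+1)/2) (by omega) (by omega)
      · have hf := famYXr k ((j+1)/2) (i/2) 0 (by omega) (by omega) (by omega) (by omega) (by omega) (Or.inr hab)
        constructor
        · intro h; exact absurd h (not_lt.mpr hf)
        · rintro ⟨c, hc, ⟨h1, h2⟩ | ⟨h1, h2⟩⟩ <;> (rw [Finset.mem_Icc] at hc; omega)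
    · -- even even
      have e1 : Wrd k i = mkw (6*k+14) (fY k (i/2)) := by unfold Wrd; rw [if_neg hi2]
      have e2 : Wrd k j = mkw (6*k+14) (fY k (j/2)) := by unfold Wrd; rw [if_neg hj2]
      rw [e1, e2, revYw, Tsum_full]
      have hf := famYYr k (i/2) (j/2) 0 (by omega) (by omega) (by omega) (by omega) (by omega)
      constructor
      · intro h; exact absurd h (not_lt.mpr hf)
      · rintro ⟨c, hc, ⟨h1, h2⟩ | ⟨h1, h2⟩⟩ <;> (rw [Finset.mem_Icc] at hc; omega)
end

section
/- Let k and l be positive integers. If for every symmetric function b : {1,…,k}² → {true, false} there exist dipole words W_1, …, W_k, each of length l, such that for all i, j one has f(W_i, Rev(W_j)) > 0 if and only if b(i,j) = true, then 2^{k(k+1)/2} ≤ 3^{kl}. (Consequently, attractively encoding all k-glue sign patterns requires dipole codes of length Ω(k).) -/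
open Dip

instance : Fintype Dip :=
  ⟨{Dip.zero, Dip.one, Dip.blank}, by intro x; cases x <;> simp⟩

lemma dipCard : Fintype.card Dip = 3 := rfl

/-- If every symmetric Boolean pattern on `{1,…,k}²` is realized as the attraction pattern
of some set of `k` dipole words of length `l`, then `2^(k(k+1)/2) ≤ 3^(k·l)`. -/
theorem stmt4 (k l : ℕ) (hk : 0 < k) (hl : 0 < l)
    (h : ∀ b : ℕ → ℕ → Bool,
      (∀ i ∈ Finset.Icc 1 k, ∀ j ∈ Finset.Icc 1 k, b i j = b j i) →
      ∃ W : ℕ → List Dip,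
        (∀ i ∈ Finset.Icc 1 k, (W i).length = l) ∧
        ∀ i ∈ Finset.Icc 1 k, ∀ j ∈ Finset.Icc 1 k,
          (0 < force (W i) ((W j).reverse) ↔ b i j = true)) :
    2 ^ (k * (k + 1) / 2) ≤ 3 ^ (k * l) := by
  classical
  -- from a symmetric Sym2 pattern, build a b as in the hypothesis
  have bdef : ∀ g : Sym2 (Fin k) → Bool, ∃ b : ℕ → ℕ → Bool,
      (∀ i ∈ Finset.Icc 1 k, ∀ j ∈ Finset.Icc 1 k, b i j = b j i) ∧
      (∀ a c : Fin k, b (a.1 + 1) (c.1 + 1) = g s(a, c)) := by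
    intro g
    refine ⟨fun i j => if hij : 1 ≤ i ∧ i ≤ k ∧ 1 ≤ j ∧ j ≤ k then
        g s(⟨i - 1, by omega⟩, ⟨j - 1, by omega⟩) else false, ?_, ?_⟩
    · intro i hi j hj
      simp only [Finset.mem_Icc] at hi hj
      dsimp only
      rw [dif_pos ⟨hi.1, hi.2, hj.1, hj.2⟩, dif_pos ⟨hj.1, hj.2, hi.1, hi.2⟩,
        Sym2.eq_swap]
    · intro a c
      have ha := a.2; have hc := c.2
      dsimp only
      rw [dif_pos ⟨by omega, by omega, by omega, by omega⟩]
      congr 1 <;> simp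
  choose b hbsymm hbval using bdef
  -- the words realizing each pattern
  choose W hWlen hWforce using fun g => h (b g) (hbsymm g)
  -- the encoding map
  have hmem : ∀ a : Fin k, a.1 + 1 ∈ Finset.Icc 1 k := by
    intro a; have := a.2; simp [Finset.mem_Icc]
  set F : (Sym2 (Fin k) → Bool) → (Fin k → Fin l → Dip) :=
    fun g a m => (W g (a.1 + 1)).get ⟨m.1, by rw [hWlen g _ (hmem a)]; exact m.2⟩ with hF
  have hinj : Function.Injective F := by
    intro g₁ g₂ heq
    have hWeq : ∀ a : Fin k, W g₁ (a.1 + 1) = W g₂ (a.1 + 1) := by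
      intro a
      apply List.ext_get (by rw [hWlen g₁ _ (hmem a), hWlen g₂ _ (hmem a)])
      intro n h1 h2
      have h1l : n < l := by rwa [hWlen g₁ _ (hmem a)] at h1
      have := congrFun (congrFun heq a) ⟨n, h1l⟩
      simpa [hF] using this
    funext s
    induction s using Sym2.ind with
    | _ a c =>
      have e1 := hWforce g₁ _ (hmem a) _ (hmem c)
      have e2 := hWforce g₂ _ (hmem a) _ (hmem c)
      rw [hWeq a, hWeq c] at e1
      rw [← hbval g₁ a c, ← hbval g₂ a c]
      rw [Bool.eq_iff_iff, ← e1, ← e2]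
  have hcard := Fintype.card_le_of_injective F hinj
  rw [Fintype.card_fun, Fintype.card_fun, Fintype.card_fun, Sym2.card,
    Fintype.card_fin, Fintype.card_bool, dipCard, Fintype.card_fin,
    Nat.choose_two_right, ← pow_mul] at hcard
  have : (k + 1) * (k + 1 - 1) / 2 = k * (k + 1) / 2 := by
    rw [Nat.add_sub_cancel, mul_comm]
  rw [this, mul_comm l k] at hcard
  exact hcard
end

section
/- There exists a constant c > 0 such that for every integer k ≥ 2 there exists a set of 2k dipole words of common length at most c·log₂(k) that attractively encodes the canonical signed 2k-glue function. -/
open Dip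

namespace SA

/-- letter coded by an integer in {-1,0,1} : 1 ↦ '0', -1 ↦ '1', 0 ↦ blank -/
def dip (z : ℤ) : Dip := if z = 1 then Dip.zero else if z = -1 then Dip.one else Dip.blank

lemma lf_dip {a b : ℤ} (ha1 : -1 ≤ a) (ha2 : a ≤ 1) (hb1 : -1 ≤ b) (hb2 : b ≤ 1) :
    lf (dip a) (dip b) = -(a * b) := by
  have ha : a = -1 ∨ a = 0 ∨ a = 1 := by omega
  have hb : b = -1 ∨ b = 0 ∨ b = 1 := by omega
  rcases ha with rfl | rfl | rfl <;> rcases hb with rfl | rfl | rfl <;>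
    simp [dip, lf] <;> norm_num [lf]

lemma prod_lb {x y : ℤ} (hx : -1 ≤ x) (hx1 : x ≤ 1) (hy : -1 ≤ y) (hy1 : y ≤ 1) :
    -1 ≤ x * y := by
  have hxx : x = -1 ∨ x = 0 ∨ x = 1 := by omega
  have hyy : y = -1 ∨ y = 0 ∨ y = 1 := by omega
  rcases hxx with rfl | rfl | rfl <;> rcases hyy with rfl | rfl | rfl <;> norm_num

/-- master sum bound : at most two "danger" positions each ≥ -1, two compensators each ≥ 1 -/
lemma master {f : ℕ → ℤ} {N : ℕ} (d1 d2 c1 c2 : ℕ)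
    (hc1 : c1 < N) (hc2 : c2 < N) (hne : c1 ≠ c2)
    (h1 : 1 ≤ f c1) (h2 : 1 ≤ f c2)
    (hpos : ∀ t, t < N → t ≠ d1 → t ≠ d2 → 0 ≤ f t)
    (hlow : ∀ t, t < N → -1 ≤ f t) :
    0 ≤ ∑ t ∈ Finset.range N, f t := by
  classical
  have hc1' : c1 ∈ Finset.range N := Finset.mem_range.2 hc1
  have hc2' : c2 ∈ (Finset.range N).erase c1 :=
    Finset.mem_erase.2 ⟨fun h => hne h.symm, Finset.mem_range.2 hc2⟩
  rw [← Finset.add_sum_erase _ f hc1', ← Finset.add_sum_erase _ f hc2']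
  have hrest : (-2 : ℤ) ≤ ∑ t ∈ ((Finset.range N).erase c1).erase c2, f t := by
    set S := ((Finset.range N).erase c1).erase c2 with hS
    have hb : ∀ t ∈ S,
        ((if t = d1 then (-1:ℤ) else 0) + (if t = d2 then (-1:ℤ) else 0)) ≤ f t := by
      intro t ht
      have htN : t < N := by
        have := Finset.mem_of_mem_erase (Finset.mem_of_mem_erase ht)
        exact Finset.mem_range.1 this
      by_cases e1 : t = d1 <;> by_cases e2 : t = d2
      · rw [if_pos e1, if_pos e2]; have := hlow t htN; linarith
      · rw [if_pos e1, if_neg e2]; have := hlow t htN; linarith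
      · rw [if_neg e1, if_pos e2]; have := hlow t htN; linarith
      · rw [if_neg e1, if_neg e2]; have := hpos t htN e1 e2; linarith
    have h2' := Finset.sum_le_sum hb
    rw [Finset.sum_add_distrib] at h2'
    have e1 : ∑ t ∈ S, (if t = d1 then (-1:ℤ) else 0) = if d1 ∈ S then (-1:ℤ) else 0 :=
      Finset.sum_ite_eq' S d1 (fun _ => (-1:ℤ))
    have e2 : ∑ t ∈ S, (if t = d2 then (-1:ℤ) else 0) = if d2 ∈ S then (-1:ℤ) else 0 :=
      Finset.sum_ite_eq' S d2 (fun _ => (-1:ℤ))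
    rw [e1, e2] at h2'
    split_ifs at h2' <;> linarith
  linarith

lemma master1 {f : ℕ → ℤ} {N : ℕ} (d1 c1 : ℕ)
    (hc1 : c1 < N) (h1 : 1 ≤ f c1)
    (hpos : ∀ t, t < N → t ≠ d1 → 0 ≤ f t)
    (hlow : ∀ t, t < N → -1 ≤ f t) :
    0 ≤ ∑ t ∈ Finset.range N, f t := by
  classical
  have hc1' : c1 ∈ Finset.range N := Finset.mem_range.2 hc1
  rw [← Finset.add_sum_erase _ f hc1']
  have hrest : (-1 : ℤ) ≤ ∑ t ∈ (Finset.range N).erase c1, f t := by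
    set S := (Finset.range N).erase c1 with hS
    have hb : ∀ t ∈ S, ((if t = d1 then (-1:ℤ) else 0)) ≤ f t := by
      intro t ht
      have htN : t < N := Finset.mem_range.1 (Finset.mem_of_mem_erase ht)
      by_cases e1 : t = d1
      · rw [if_pos e1]; exact hlow t htN
      · rw [if_neg e1]; exact hpos t htN e1
    have h2' := Finset.sum_le_sum hb
    have e1 : ∑ t ∈ S, (if t = d1 then (-1:ℤ) else 0) = if d1 ∈ S then (-1:ℤ) else 0 :=
      Finset.sum_ite_eq' S d1 (fun _ => (-1:ℤ))
    rw [e1] at h2'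
    split_ifs at h2' <;> linarith
  linarith

/-- shifted correlation of coded words -/
def corr (n : ℕ) (u v : ℕ → ℤ) (s : ℕ) : ℤ :=
  ∑ t ∈ Finset.range (n - s), u t * v (t + s)

lemma corr_zero (n : ℕ) (u v : ℕ → ℤ) :
    corr n u v 0 = ∑ t ∈ Finset.range n, u t * v t := by
  simp [corr]

def Rv (n : ℕ) (v : ℕ → ℤ) : ℕ → ℤ := fun p => v (n - 1 - p)

lemma corr_congr_right {n : ℕ} {u v v' : ℕ → ℤ} (s : ℕ) (h : ∀ p, p < n → v p = v' p) :
    corr n u v s = corr n u v' s := by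
  unfold corr
  refine Finset.sum_congr rfl fun t ht => ?_
  have := Finset.mem_range.1 ht
  rw [h (t + s) (by omega)]

lemma corr_congr_left {n : ℕ} {u u' v : ℕ → ℤ} (s : ℕ) (h : ∀ p, p < n → u p = u' p) :
    corr n u v s = corr n u' v s := by
  unfold corr
  refine Finset.sum_congr rfl fun t ht => ?_
  have := Finset.mem_range.1 ht
  rw [h t (by omega)]

lemma corr_rev {n : ℕ} (u v : ℕ → ℤ) (s : ℕ) (hs : s ≤ n) :
    corr n u v s = corr n (Rv n v) (Rv n u) s := by
  unfold corr Rv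
  rw [← Finset.sum_range_reflect]
  refine Finset.sum_congr rfl fun t ht => ?_
  have ht' := Finset.mem_range.1 ht
  have e1 : n - s - 1 - t + s = n - 1 - t := by omega
  have e2 : n - 1 - (t + s) = n - s - 1 - t := by omega
  rw [e1, e2, mul_comm]

lemma corr0_rev_symm {n : ℕ} (u v : ℕ → ℤ) :
    corr n u (Rv n v) 0 = corr n v (Rv n u) 0 := by
  unfold corr Rv
  rw [← Finset.sum_range_reflect]
  refine Finset.sum_congr rfl fun t ht => ?_
  have ht' := Finset.mem_range.1 ht
  rw [Nat.sub_zero] at ht'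
  simp only [Nat.add_zero, Nat.sub_zero]
  have e3 : n - 1 - (n - 1 - t) = t := by omega
  rw [e3, mul_comm]


/-! ### The coded words -/

/-- marker position: `false ↦ 6m+13`, `true ↦ 10m+19` -/
def mrk (m : ℕ) (q : Bool) : ℕ := if q then 10*m+19 else 6*m+13

/-- slot cell for bit `i`, side `b` -/
def cel (m : ℕ) (i : ℕ) (b : Bool) : ℕ := if b then 8*m+16+2*i else 8*m+16-2*i

/-- slot-membership of position `p` for selector `σ` -/
def InS (m : ℕ) (σ : ℕ → Bool) (p : ℕ) : Prop := ∃ i ∈ Finset.Icc 1 m, p = cel m i (σ i)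

instance (m : ℕ) (σ : ℕ → Bool) (p : ℕ) : Decidable (InS m σ p) := by
  unfold InS; infer_instance

/-- word length -/
def nn (m : ℕ) : ℕ := 16*m+33

/-- "x-type" coded word -/
def Xw (m : ℕ) (σ : ℕ → Bool) (q : Bool) (p : ℕ) : ℤ :=
  if p = mrk m q then 1 else if p % 2 = 0 ∧ ¬ InS m σ p then 1 else 0

/-- "w-type" coded word -/
def Ww (m : ℕ) (σ : ℕ → Bool) (q : Bool) (p : ℕ) : ℤ :=
  if p = mrk m q then -1 else if p % 2 = 1 then 1 else if InS m σ p then 1 else 0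

lemma mrk_cases (m : ℕ) (q : Bool) : mrk m q = 6*m+13 ∨ mrk m q = 10*m+19 := by
  cases q <;> simp [mrk]

lemma mrk_mod (m : ℕ) (q : Bool) : mrk m q % 2 = 1 := by
  cases q <;> simp [mrk] <;> omega

lemma mrk_false (m : ℕ) : mrk m false = 6*m+13 := rfl
lemma mrk_true (m : ℕ) : mrk m true = 10*m+19 := rfl

lemma mrk_add_eq (m : ℕ) {q q' : Bool} {s : ℕ} (hs : 1 ≤ s)
    (h : mrk m q + s = mrk m q') : q = false ∧ q' = true ∧ s = 4*m+6 := by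
  cases q <;> cases q' <;> simp_all [mrk] <;> omega

lemma cel_mod (m i : ℕ) (b : Bool) (hi2 : i ≤ m) : cel m i b % 2 = 0 := by
  cases b <;> simp [cel] <;> omega

lemma cel_lb (m i : ℕ) (b : Bool) (hi2 : i ≤ m) : 6*m+16 ≤ cel m i b := by
  cases b <;> simp [cel] <;> omega

lemma cel_ub (m i : ℕ) (b : Bool) (hi2 : i ≤ m) : cel m i b ≤ 10*m+16 := by
  cases b <;> simp [cel] <;> omega

lemma cel_inj (m : ℕ) {i i' : ℕ} {b b' : Bool} (hi1 : 1 ≤ i) (hi2 : i ≤ m)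
    (hj1 : 1 ≤ i') (hj2 : i' ≤ m) (h : cel m i b = cel m i' b') : i = i' ∧ b = b' := by
  cases b <;> cases b' <;> simp [cel] at h <;>
    first
    | exact ⟨by omega, rfl⟩
    | (exact absurd h (by omega))

lemma InS_mod {m : ℕ} {σ : ℕ → Bool} {p : ℕ} (h : InS m σ p) : p % 2 = 0 := by
  obtain ⟨i, hi, rfl⟩ := h
  exact cel_mod m i _ (Finset.mem_Icc.1 hi).2

lemma InS_lb {m : ℕ} {σ : ℕ → Bool} {p : ℕ} (h : InS m σ p) : 6*m+16 ≤ p := by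
  obtain ⟨i, hi, rfl⟩ := h
  exact cel_lb m i _ (Finset.mem_Icc.1 hi).2

lemma InS_ub {m : ℕ} {σ : ℕ → Bool} {p : ℕ} (h : InS m σ p) : p ≤ 10*m+16 := by
  obtain ⟨i, hi, rfl⟩ := h
  exact cel_ub m i _ (Finset.mem_Icc.1 hi).2

lemma notInS_lo {m : ℕ} (σ : ℕ → Bool) {p : ℕ} (h : p < 6*m+16) : ¬ InS m σ p :=
  fun hS => by have := InS_lb hS; omega

lemma notInS_hi {m : ℕ} (σ : ℕ → Bool) {p : ℕ} (h : 10*m+16 < p) : ¬ InS m σ p :=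
  fun hS => by have := InS_ub hS; omega

lemma InS_cel {m : ℕ} (σ : ℕ → Bool) {i : ℕ} (hi1 : 1 ≤ i) (hi2 : i ≤ m) :
    InS m σ (cel m i (σ i)) := ⟨i, Finset.mem_Icc.2 ⟨hi1, hi2⟩, rfl⟩

lemma InS_cel_iff {m : ℕ} (σ : ℕ → Bool) {i : ℕ} {b : Bool} (hi1 : 1 ≤ i) (hi2 : i ≤ m) :
    InS m σ (cel m i b) ↔ σ i = b := by
  constructor
  · rintro ⟨i', hi', h⟩
    obtain ⟨hj1, hj2⟩ := Finset.mem_Icc.1 hi'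
    obtain ⟨rfl, h2⟩ := cel_inj m hj1 hj2 hi1 hi2 h.symm
    exact h2.symm ▸ rfl
  · rintro rfl
    exact InS_cel σ hi1 hi2

lemma mrk_ne_of_even {m : ℕ} {p : ℕ} (h : p % 2 = 0) (q : Bool) : p ≠ mrk m q := by
  have := mrk_mod m q; omega

/-! ### value lemmas -/

lemma Xw_nonneg (m : ℕ) (σ : ℕ → Bool) (q : Bool) (p : ℕ) : 0 ≤ Xw m σ q p := by
  unfold Xw; split_ifs <;> norm_num

lemma Xw_le_one (m : ℕ) (σ : ℕ → Bool) (q : Bool) (p : ℕ) : Xw m σ q p ≤ 1 := by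
  unfold Xw; split_ifs <;> norm_num

lemma Ww_lb (m : ℕ) (σ : ℕ → Bool) (q : Bool) (p : ℕ) : -1 ≤ Ww m σ q p := by
  unfold Ww; split_ifs <;> norm_num

lemma Ww_le_one (m : ℕ) (σ : ℕ → Bool) (q : Bool) (p : ℕ) : Ww m σ q p ≤ 1 := by
  unfold Ww; split_ifs <;> norm_num

lemma Ww_nonneg (m : ℕ) (σ : ℕ → Bool) (q : Bool) {p : ℕ} (h : p ≠ mrk m q) :
    0 ≤ Ww m σ q p := by
  unfold Ww; rw [if_neg h]; split_ifs <;> norm_num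

lemma Xw_eval_mark (m : ℕ) (σ : ℕ → Bool) (q : Bool) : Xw m σ q (mrk m q) = 1 := by
  simp [Xw]

lemma Xw_eval_even (m : ℕ) (σ : ℕ → Bool) (q : Bool) {p : ℕ} (he : p % 2 = 0)
    (hS : ¬ InS m σ p) : Xw m σ q p = 1 := by
  unfold Xw
  rw [if_neg (mrk_ne_of_even he q), if_pos ⟨he, hS⟩]

lemma Xw_eval_odd (m : ℕ) (σ : ℕ → Bool) (q : Bool) {p : ℕ} (ho : p % 2 = 1)
    (hne : p ≠ mrk m q) : Xw m σ q p = 0 := by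
  unfold Xw
  rw [if_neg hne, if_neg]
  rintro ⟨h, -⟩; omega

lemma Xw_eval_inS (m : ℕ) (σ : ℕ → Bool) (q : Bool) {p : ℕ} (hS : InS m σ p) :
    Xw m σ q p = 0 := by
  unfold Xw
  rw [if_neg (mrk_ne_of_even (InS_mod hS) q), if_neg]
  rintro ⟨-, h⟩; exact h hS

lemma Ww_eval_mark (m : ℕ) (σ : ℕ → Bool) (q : Bool) : Ww m σ q (mrk m q) = -1 := by
  simp [Ww]

lemma Ww_eval_odd (m : ℕ) (σ : ℕ → Bool) (q : Bool) {p : ℕ} (ho : p % 2 = 1)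
    (hne : p ≠ mrk m q) : Ww m σ q p = 1 := by
  unfold Ww
  rw [if_neg hne, if_pos ho]

lemma Ww_eval_inS (m : ℕ) (σ : ℕ → Bool) (q : Bool) {p : ℕ} (hS : InS m σ p) :
    Ww m σ q p = 1 := by
  have he := InS_mod hS
  unfold Ww
  rw [if_neg (mrk_ne_of_even he q), if_neg (by omega), if_pos hS]

lemma Ww_eval_even_notS (m : ℕ) (σ : ℕ → Bool) (q : Bool) {p : ℕ} (he : p % 2 = 0)
    (hS : ¬ InS m σ p) : Ww m σ q p = 0 := by
  unfold Ww
  rw [if_neg (mrk_ne_of_even he q), if_neg (by omega), if_neg hS]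
/-! ### nonzero-shift correlation lemmas -/

lemma LA (m : ℕ) (σ σ' : ℕ → Bool) (q q' : Bool) (s : ℕ) :
    0 ≤ corr (nn m) (Xw m σ q) (Xw m σ' q') s := by
  refine Finset.sum_nonneg fun t _ => ?_
  exact mul_nonneg (Xw_nonneg _ _ _ _) (Xw_nonneg _ _ _ _)

lemma LB (m : ℕ) (hm : 3 ≤ m) (σ σ' : ℕ → Bool) (q q' : Bool) (s : ℕ) (hs : 1 ≤ s) :
    0 ≤ corr (nn m) (Xw m σ q) (Ww m σ' q') s := by
  have hq := mrk_cases m q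
  have hq' := mrk_cases m q'
  unfold corr
  rcases Nat.mod_two_eq_zero_or_one s with hpar | hpar
  · -- s even
    by_cases hstar : q = false ∧ q' = true ∧ s = 4*m+6
    · obtain ⟨rfl, rfl, rfl⟩ := hstar
      have hc1v := cel_lb m 1 (σ' 1) (by omega)
      have hc1u := cel_ub m 1 (σ' 1) (by omega)
      have hc2v := cel_lb m 2 (σ' 2) (by omega)
      have hc2u := cel_ub m 2 (σ' 2) (by omega)
      have hc1m := cel_mod m 1 (σ' 1) (by omega)
      have hc2m := cel_mod m 2 (σ' 2) (by omega)
      have hcne : cel m 1 (σ' 1) ≠ cel m 2 (σ' 2) := by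
        intro h
        have := (cel_inj m (by omega) (by omega) (by omega) (by omega) h).1
        omega
      refine master (6*m+13) (6*m+13) (cel m 1 (σ' 1) - (4*m+6)) (cel m 2 (σ' 2) - (4*m+6))
        (by simp [nn]; omega) (by simp [nn]; omega) (by omega) ?_ ?_ ?_ ?_
      · have e1 : cel m 1 (σ' 1) - (4*m+6) + (4*m+6) = cel m 1 (σ' 1) := by omega
        rw [e1, Xw_eval_even m σ false (p := cel m 1 (σ' 1) - (4*m+6)) (by omega)
            (notInS_lo σ (by omega)),
          Ww_eval_inS m σ' true (InS_cel σ' (by omega) (by omega))]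
        norm_num
      · have e1 : cel m 2 (σ' 2) - (4*m+6) + (4*m+6) = cel m 2 (σ' 2) := by omega
        rw [e1, Xw_eval_even m σ false (p := cel m 2 (σ' 2) - (4*m+6)) (by omega)
            (notInS_lo σ (by omega)),
          Ww_eval_inS m σ' true (InS_cel σ' (by omega) (by omega))]
        norm_num
      · intro t ht h1 _
        refine mul_nonneg (Xw_nonneg _ _ _ _) (Ww_nonneg _ _ _ ?_)
        rw [mrk_true]; omega
      · intro t ht
        exact prod_lb (by have := Xw_nonneg m σ false t; omega) (Xw_le_one _ _ _ _)
          (Ww_lb _ _ _ _) (Ww_le_one _ _ _ _)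
    · refine Finset.sum_nonneg fun t ht => ?_
      by_cases hmark : t + s = mrk m q'
      · have hXz : Xw m σ q t = 0 := by
          refine Xw_eval_odd m σ q (by have := mrk_mod m q'; omega) ?_
          intro h
          rw [h] at hmark
          exact hstar (mrk_add_eq m hs hmark)
        rw [hXz, zero_mul]
      · exact mul_nonneg (Xw_nonneg _ _ _ _) (Ww_nonneg _ _ _ hmark)
  · -- s odd
    by_cases hbig : mrk m q' < s
    · refine Finset.sum_nonneg fun t ht => ?_
      refine mul_nonneg (Xw_nonneg _ _ _ _) (Ww_nonneg _ _ _ ?_)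
      omega
    · push_neg at hbig
      obtain ⟨c1, c2, hc1or, hc2or, hne, hd1, hd2⟩ :
          ∃ c1 c2 : ℕ, (c1 = 2 ∨ c1 = 4) ∧ (c2 = 4 ∨ c2 = 6) ∧ c1 ≠ c2 ∧
            c1 ≠ mrk m q' - s ∧ c2 ≠ mrk m q' - s := by
        by_cases h2 : mrk m q' - s = 2
        · exact ⟨4, 6, by omega, by omega, by omega, by omega, by omega⟩
        · by_cases h4 : mrk m q' - s = 4
          · exact ⟨2, 6, by omega, by omega, by omega, by omega, by omega⟩
          · exact ⟨2, 4, by omega, by omega, by omega, by omega, by omega⟩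
      refine master (mrk m q' - s) (mrk m q' - s) c1 c2
        (by simp [nn]; omega) (by simp [nn]; omega) hne ?_ ?_ ?_ ?_
      · rw [Xw_eval_even m σ q (p := c1) (by omega) (notInS_lo σ (by omega)),
          Ww_eval_odd m σ' q' (by omega) (by omega)]
        norm_num
      · rw [Xw_eval_even m σ q (p := c2) (by omega) (notInS_lo σ (by omega)),
          Ww_eval_odd m σ' q' (by omega) (by omega)]
        norm_num
      · intro t ht h1 _
        exact mul_nonneg (Xw_nonneg _ _ _ _) (Ww_nonneg _ _ _ (by omega))
      · intro t ht
        exact prod_lb (by have := Xw_nonneg m σ q t; omega) (Xw_le_one _ _ _ _)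
          (Ww_lb _ _ _ _) (Ww_le_one _ _ _ _)

lemma LD (m : ℕ) (hm : 3 ≤ m) (σ σ' : ℕ → Bool) (q q' : Bool) (s : ℕ) (hs : 1 ≤ s) :
    0 ≤ corr (nn m) (Ww m σ q) (Ww m σ' q') s := by
  have hq := mrk_cases m q
  have hq' := mrk_cases m q'
  unfold corr
  rcases Nat.mod_two_eq_zero_or_one s with hpar | hpar
  · -- s even
    by_cases hbig : s ≤ 10*m+19
    · obtain ⟨c1, c2, hc1or, hc2or, hne, hd1, hd2⟩ :
          ∃ c1 c2 : ℕ, (c1 = 1 ∨ c1 = 3) ∧ (c2 = 3 ∨ c2 = 5) ∧ c1 ≠ c2 ∧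
            c1 + s ≠ mrk m q' ∧ c2 + s ≠ mrk m q' := by
        by_cases h1 : 1 + s = mrk m q'
        · exact ⟨3, 5, by omega, by omega, by omega, by omega, by omega⟩
        · by_cases h3 : 3 + s = mrk m q'
          · exact ⟨1, 5, by omega, by omega, by omega, by omega, by omega⟩
          · exact ⟨1, 3, by omega, by omega, by omega, by omega, by omega⟩
      refine master (mrk m q) (mrk m q' - s) c1 c2
        (by simp [nn]; omega) (by simp [nn]; omega) hne ?_ ?_ ?_ ?_
      · rw [Ww_eval_odd m σ q (p := c1) (by omega) (by omega),
          Ww_eval_odd m σ' q' (by omega) hd1]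
        norm_num
      · rw [Ww_eval_odd m σ q (p := c2) (by omega) (by omega),
          Ww_eval_odd m σ' q' (by omega) hd2]
        norm_num
      · intro t ht h1 h2
        exact mul_nonneg (Ww_nonneg _ _ _ h1) (Ww_nonneg _ _ _ (by omega))
      · intro t ht
        exact prod_lb (Ww_lb _ _ _ _) (Ww_le_one _ _ _ _) (Ww_lb _ _ _ _) (Ww_le_one _ _ _ _)
    · refine Finset.sum_nonneg fun t ht => ?_
      have htr := Finset.mem_range.1 ht
      refine mul_nonneg (Ww_nonneg _ _ _ ?_) (Ww_nonneg _ _ _ ?_)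
      · simp [nn] at htr; omega
      · omega
  · -- s odd
    by_cases hsm : s ≤ 4*m+3
    · have hcel : ∀ i : ℕ, 1 ≤ i → i ≤ m →
          (cel m i (σ i)) % 2 = 0 ∧ 6*m+16 ≤ cel m i (σ i) ∧ cel m i (σ i) ≤ 10*m+16 :=
        fun i h1 h2 => ⟨cel_mod m i _ h2, cel_lb m i _ h2, cel_ub m i _ h2⟩
      have h1 := hcel 1 (by omega) (by omega)
      have h2 := hcel 2 (by omega) (by omega)
      have h3 := hcel 3 (by omega) (by omega)
      have hne12 : cel m 1 (σ 1) ≠ cel m 2 (σ 2) := fun h => by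
        have := (cel_inj m (by omega) (by omega) (by omega) (by omega) h).1; omega
      have hne13 : cel m 1 (σ 1) ≠ cel m 3 (σ 3) := fun h => by
        have := (cel_inj m (by omega) (by omega) (by omega) (by omega) h).1; omega
      have hne23 : cel m 2 (σ 2) ≠ cel m 3 (σ 3) := fun h => by
        have := (cel_inj m (by omega) (by omega) (by omega) (by omega) h).1; omega
      obtain ⟨i1, i2, hi1, hi2, hne, hd1, hd2⟩ :
          ∃ i1 i2 : ℕ, (i1 = 1 ∨ i1 = 2 ∨ i1 = 3) ∧ (i2 = 1 ∨ i2 = 2 ∨ i2 = 3) ∧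
            cel m i1 (σ i1) ≠ cel m i2 (σ i2) ∧
            cel m i1 (σ i1) + s ≠ mrk m q' ∧ cel m i2 (σ i2) + s ≠ mrk m q' := by
        by_cases e1 : cel m 1 (σ 1) + s = mrk m q'
        · exact ⟨2, 3, by omega, by omega, hne23, by omega, by omega⟩
        · by_cases e2 : cel m 2 (σ 2) + s = mrk m q'
          · exact ⟨1, 3, by omega, by omega, hne13, by omega, by omega⟩
          · exact ⟨1, 2, by omega, by omega, hne12, e1, e2⟩
      have hb1 := hcel i1 (by omega) (by omega)
      have hb2 := hcel i2 (by omega) (by omega)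
      refine master (mrk m q) (mrk m q' - s) (cel m i1 (σ i1)) (cel m i2 (σ i2))
        (by simp [nn]; omega) (by simp [nn]; omega) hne ?_ ?_ ?_ ?_
      · rw [Ww_eval_inS m σ q (InS_cel σ (by omega) (by omega)),
          Ww_eval_odd m σ' q' (by omega) hd1]
        norm_num
      · rw [Ww_eval_inS m σ q (InS_cel σ (by omega) (by omega)),
          Ww_eval_odd m σ' q' (by omega) hd2]
        norm_num
      · intro t ht h1' h2'
        exact mul_nonneg (Ww_nonneg _ _ _ h1') (Ww_nonneg _ _ _ (by omega))
      · intro t ht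
        exact prod_lb (Ww_lb _ _ _ _) (Ww_le_one _ _ _ _) (Ww_lb _ _ _ _) (Ww_le_one _ _ _ _)
    · refine Finset.sum_nonneg fun t ht => ?_
      by_cases e1 : t = mrk m q
      · have : Ww m σ' q' (t + s) = 0 := by
          refine Ww_eval_even_notS m σ' q' (by have := mrk_mod m q; omega) ?_
          exact notInS_hi σ' (by omega)
        rw [this, mul_zero]
      · by_cases e2 : t + s = mrk m q'
        · have : Ww m σ q t = 0 := by
            refine Ww_eval_even_notS m σ q (by have := mrk_mod m q'; omega) ?_
            exact notInS_lo σ (by omega)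
          rw [this, zero_mul]
        · exact mul_nonneg (Ww_nonneg _ _ _ e1) (Ww_nonneg _ _ _ e2)

/-! ### reversal identities -/

lemma Rv_X (m : ℕ) (σ : ℕ → Bool) (q : Bool) {p : ℕ} (hp : p < nn m) :
    Rv (nn m) (Xw m σ q) p = Xw m (fun i => !(σ i)) (!q) p := by
  unfold Rv Xw
  have e1 : (nn m - 1 - p = mrk m q) ↔ (p = mrk m (!q)) := by
    cases q <;> simp [mrk, nn] at * <;> omega
  have e2 : (nn m - 1 - p) % 2 = p % 2 := by
    simp [nn] at *; omega
  have hcelf : ∀ j : ℕ, cel m j false = 8*m+16-2*j := fun j => by simp [cel]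
  have hcelt : ∀ j : ℕ, cel m j true = 8*m+16+2*j := fun j => by simp [cel]
  have hn : nn m = 16*m+33 := rfl
  have e3 : InS m σ (nn m - 1 - p) ↔ InS m (fun i => !(σ i)) p := by
    constructor
    · rintro ⟨i, hi, h⟩
      obtain ⟨ha, hb⟩ := Finset.mem_Icc.1 hi
      refine ⟨i, hi, ?_⟩
      show p = cel m i (!(σ i))
      cases hσ : σ i <;> rw [hσ] at h
      · rw [Bool.not_false, hcelt]; rw [hcelf] at h; omega
      · rw [Bool.not_true, hcelf]; rw [hcelt] at h; omega
    · rintro ⟨i, hi, h⟩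
      obtain ⟨ha, hb⟩ := Finset.mem_Icc.1 hi
      refine ⟨i, hi, ?_⟩
      have h' : p = cel m i (!(σ i)) := h
      cases hσ : σ i
      · rw [hσ, Bool.not_false, hcelt] at h'; rw [hcelf]; omega
      · rw [hσ, Bool.not_true, hcelf] at h'; rw [hcelt]; omega
  have e4 : ((nn m - 1 - p) % 2 = 0 ∧ ¬InS m σ (nn m - 1 - p)) ↔
      (p % 2 = 0 ∧ ¬InS m (fun i => !(σ i)) p) := by
    constructor
    · rintro ⟨hh1, hh2⟩; exact ⟨by omega, fun hS => hh2 (e3.2 hS)⟩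
    · rintro ⟨hh1, hh2⟩; exact ⟨by omega, fun hS => hh2 (e3.1 hS)⟩
  rw [if_congr e1 rfl rfl, if_congr e4 rfl rfl]

lemma Rv_W (m : ℕ) (σ : ℕ → Bool) (q : Bool) {p : ℕ} (hp : p < nn m) :
    Rv (nn m) (Ww m σ q) p = Ww m (fun i => !(σ i)) (!q) p := by
  unfold Rv Ww
  have e1 : (nn m - 1 - p = mrk m q) ↔ (p = mrk m (!q)) := by
    cases q <;> simp [mrk, nn] at * <;> omega
  have e2 : (nn m - 1 - p) % 2 = p % 2 := by
    simp [nn] at *; omega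
  have hcelf : ∀ j : ℕ, cel m j false = 8*m+16-2*j := fun j => by simp [cel]
  have hcelt : ∀ j : ℕ, cel m j true = 8*m+16+2*j := fun j => by simp [cel]
  have hn : nn m = 16*m+33 := rfl
  have e3 : InS m σ (nn m - 1 - p) ↔ InS m (fun i => !(σ i)) p := by
    constructor
    · rintro ⟨i, hi, h⟩
      obtain ⟨ha, hb⟩ := Finset.mem_Icc.1 hi
      refine ⟨i, hi, ?_⟩
      show p = cel m i (!(σ i))
      cases hσ : σ i <;> rw [hσ] at h
      · rw [Bool.not_false, hcelt]; rw [hcelf] at h; omega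
      · rw [Bool.not_true, hcelf]; rw [hcelt] at h; omega
    · rintro ⟨i, hi, h⟩
      obtain ⟨ha, hb⟩ := Finset.mem_Icc.1 hi
      refine ⟨i, hi, ?_⟩
      have h' : p = cel m i (!(σ i)) := h
      cases hσ : σ i
      · rw [hσ, Bool.not_false, hcelt] at h'; rw [hcelf]; omega
      · rw [hσ, Bool.not_true, hcelf] at h'; rw [hcelt]; omega
  have f2 : ((nn m - 1 - p) % 2 = 1) ↔ (p % 2 = 1) := by omega
  rw [if_congr e1 rfl rfl, if_congr f2 rfl rfl, if_congr e3 rfl rfl]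

lemma LC (m : ℕ) (hm : 3 ≤ m) (σ σ' : ℕ → Bool) (q q' : Bool) (s : ℕ) (hs : 1 ≤ s)
    (hs2 : s ≤ nn m) :
    0 ≤ corr (nn m) (Ww m σ q) (Xw m σ' q') s := by
  rw [corr_rev _ _ _ hs2,
    corr_congr_left s (fun p hp => Rv_X m σ' q' hp),
    corr_congr_right s (fun p hp => Rv_W m σ q hp)]
  exact LB m hm _ _ _ _ s hs
/-! ### zero-shift lemmas -/

lemma P1a (m : ℕ) (σ : ℕ → Bool) :
    corr (nn m) (Xw m σ false) (Ww m σ false) 0 = -1 := by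
  rw [corr_zero]
  have h : ∀ t ∈ Finset.range (nn m),
      Xw m σ false t * Ww m σ false t = if t = mrk m false then (-1:ℤ) else 0 := by
    intro t _
    by_cases h : t = mrk m false
    · subst h
      rw [Xw_eval_mark, Ww_eval_mark, if_pos rfl]
      norm_num
    · rw [if_neg h]
      rcases Nat.mod_two_eq_zero_or_one t with he | ho
      · by_cases hS : InS m σ t
        · rw [Xw_eval_inS m σ _ hS, zero_mul]
        · rw [Ww_eval_even_notS m σ _ he hS, mul_zero]
      · rw [Xw_eval_odd m σ _ ho h, zero_mul]
  rw [Finset.sum_congr rfl h, Finset.sum_ite_eq' (Finset.range (nn m)) (mrk m false)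
    (fun _ => (-1:ℤ))]
  rw [if_pos (Finset.mem_range.2 (by rw [mrk_false]; simp [nn]; omega))]

lemma P1b (m : ℕ) (σ σ' : ℕ → Bool) (h : ∃ i, 1 ≤ i ∧ i ≤ m ∧ σ i ≠ σ' i) :
    0 ≤ corr (nn m) (Xw m σ false) (Ww m σ' false) 0 := by
  obtain ⟨i, hi1, hi2, hne⟩ := h
  rw [corr_zero]
  refine master1 (mrk m false) (cel m i (σ' i)) ?_ ?_ ?_ ?_
  · have := cel_ub m i (σ' i) hi2; simp [nn]; omega
  · rw [Xw_eval_even m σ false (InS_mod (InS_cel σ' hi1 hi2)) ?_,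
      Ww_eval_inS m σ' false (InS_cel σ' hi1 hi2)]
    · norm_num
    · intro hS
      exact hne ((InS_cel_iff σ hi1 hi2).1 hS)
  · intro t _ h1
    exact mul_nonneg (Xw_nonneg _ _ _ _) (Ww_nonneg _ _ _ h1)
  · intro t _
    exact prod_lb (by have := Xw_nonneg m σ false t; omega) (Xw_le_one _ _ _ _)
      (Ww_lb _ _ _ _) (Ww_le_one _ _ _ _)

lemma P3 (m : ℕ) (σ σ' : ℕ → Bool) (q : Bool) :
    0 ≤ corr (nn m) (Ww m σ q) (Ww m σ' q) 0 := by
  rw [corr_zero]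
  refine Finset.sum_nonneg fun t _ => ?_
  by_cases h : t = mrk m q
  · subst h; rw [Ww_eval_mark, Ww_eval_mark]; norm_num
  · exact mul_nonneg (Ww_nonneg _ _ _ h) (Ww_nonneg _ _ _ h)

lemma P4 (m : ℕ) (hm : 3 ≤ m) (σ σ' : ℕ → Bool) (q q' : Bool) :
    0 ≤ corr (nn m) (Ww m σ q) (Ww m σ' q') 0 := by
  have hq := mrk_cases m q
  have hq' := mrk_cases m q'
  rw [corr_zero]
  refine master (mrk m q) (mrk m q') 1 3 (by simp only [nn]; omega) (by simp only [nn]; omega)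
    (by omega) ?_ ?_ ?_ ?_
  · rw [Ww_eval_odd m σ q (p := 1) (by omega) (by omega),
      Ww_eval_odd m σ' q' (p := 1) (by omega) (by omega)]
    norm_num
  · rw [Ww_eval_odd m σ q (p := 3) (by omega) (by omega),
      Ww_eval_odd m σ' q' (p := 3) (by omega) (by omega)]
    norm_num
  · intro t _ h1 h2
    exact mul_nonneg (Ww_nonneg _ _ _ h1) (Ww_nonneg _ _ _ h2)
  · intro t _
    exact prod_lb (Ww_lb _ _ _ _) (Ww_le_one _ _ _ _) (Ww_lb _ _ _ _) (Ww_le_one _ _ _ _)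

lemma P5 (m : ℕ) (σ σ' : ℕ → Bool) (q q' : Bool) (hqq : q ≠ q') :
    0 ≤ corr (nn m) (Xw m σ q) (Ww m σ' q') 0 := by
  rw [corr_zero]
  refine Finset.sum_nonneg fun t _ => ?_
  by_cases h : t = mrk m q'
  · have hX : Xw m σ q t = 0 := by
      refine Xw_eval_odd m σ q (by rw [h]; exact mrk_mod m q') ?_
      rw [h]
      intro hc
      cases q <;> cases q' <;> simp [mrk] at hc <;> simp_all <;> omega
    rw [hX, zero_mul]
  · exact mul_nonneg (Xw_nonneg _ _ _ _) (Ww_nonneg _ _ _ h)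

lemma P6 (m : ℕ) (σ σ' : ℕ → Bool) (q q' : Bool) (hqq : q ≠ q') :
    0 ≤ corr (nn m) (Ww m σ q) (Xw m σ' q') 0 := by
  rw [corr_zero]
  refine Finset.sum_nonneg fun t _ => ?_
  by_cases h : t = mrk m q
  · have hX : Xw m σ' q' t = 0 := by
      refine Xw_eval_odd m σ' q' (by rw [h]; exact mrk_mod m q) ?_
      rw [h]
      intro hc
      cases q <;> cases q' <;> simp [mrk] at hc <;> simp_all <;> omega
    rw [hX, mul_zero]
  · exact mul_nonneg (Ww_nonneg _ _ _ h) (Xw_nonneg _ _ _ _)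
/-! ### list bridge -/

def listOf (n : ℕ) (u : ℕ → ℤ) : List Dip := (List.range n).map (fun p => dip (u p))

lemma listOf_length (n : ℕ) (u : ℕ → ℤ) : (listOf n u).length = n := by
  simp [listOf]

lemma zipsum (F G : ℕ → Dip) : ∀ i : ℕ,
    (List.zipWith lf ((List.range i).map F) ((List.range i).map G)).sum
      = ∑ t ∈ Finset.range i, lf (F t) (G t)
  | 0 => by simp
  | (i+1) => by
      rw [List.range_succ, List.map_append, List.map_append,
        List.zipWith_append (by simp : ((List.range i).map F).length = ((List.range i).map G).length), List.sum_append, zipsum F G i,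
        Finset.sum_range_succ]
      simp

lemma take_listOf (n i : ℕ) (u : ℕ → ℤ) (hi : i ≤ n) :
    (listOf n u).take i = (List.range i).map (fun p => dip (u p)) := by
  unfold listOf
  rw [← List.map_take, List.take_range, Nat.min_eq_left hi]

lemma drop_range (n i : ℕ) (hi : i ≤ n) :
    (List.range n).drop (n - i) = (List.range i).map (fun t => n - i + t) := by
  apply List.ext_getElem
  · simp; omega
  · intro j h1 h2
    simp

lemma sufx_listOf (n i : ℕ) (u : ℕ → ℤ) (hi : i ≤ n) :
    sufx (listOf n u) i = (List.range i).map (fun t => dip (u (n - i + t))) := by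
  unfold sufx
  rw [listOf_length]
  unfold listOf
  rw [← List.map_drop, drop_range n i hi, List.map_map]
  rfl

lemma reverse_listOf (n : ℕ) (u : ℕ → ℤ) :
    (listOf n u).reverse = listOf n (Rv n u) := by
  apply List.ext_getElem
  · simp [listOf]
  · intro j h1 h2
    simp only [listOf, List.getElem_reverse, List.getElem_map, List.getElem_range]
    simp only [List.length_map, List.length_range] at h1 ⊢
    congr 1

/-- bounded words -/
def Bdd (u : ℕ → ℤ) : Prop := ∀ p, -1 ≤ u p ∧ u p ≤ 1

lemma Bdd_Rv {u : ℕ → ℤ} (hu : Bdd u) (n : ℕ) : Bdd (Rv n u) := fun p => hu _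

lemma force_full {n : ℕ} {u v : ℕ → ℤ} (hu : Bdd u) (hv : Bdd v) :
    force (listOf n u) (listOf n v) = -(corr n u v 0) := by
  unfold force listOf
  rw [zipsum, corr_zero, ← Finset.sum_neg_distrib]
  refine Finset.sum_congr rfl fun t _ => ?_
  rw [lf_dip (hu t).1 (hu t).2 (hv t).1 (hv t).2]

lemma force_take_sufx {n i : ℕ} {u v : ℕ → ℤ} (hu : Bdd u) (hv : Bdd v)
    (hi1 : 1 ≤ i) (hi2 : i ≤ n) :
    force ((listOf n u).take i) (sufx (listOf n v) i) = -(corr n u v (n - i)) := by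
  rw [take_listOf n i u hi2, sufx_listOf n i v hi2]
  unfold force
  rw [zipsum]
  unfold corr
  have e : n - (n - i) = i := by omega
  rw [e, ← Finset.sum_neg_distrib]
  refine Finset.sum_congr rfl fun t _ => ?_
  rw [lf_dip (hu t).1 (hu t).2 (hv _).1 (hv _).2]
  have e2 : n - i + t = t + (n - i) := by omega
  rw [e2]

lemma force_sufx_take {n i : ℕ} {u v : ℕ → ℤ} (hu : Bdd u) (hv : Bdd v)
    (hi1 : 1 ≤ i) (hi2 : i ≤ n) :
    force (sufx (listOf n u) i) ((listOf n v).take i) = -(corr n v u (n - i)) := by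
  rw [take_listOf n i v hi2, sufx_listOf n i u hi2]
  unfold force
  rw [zipsum]
  unfold corr
  have e : n - (n - i) = i := by omega
  rw [e, ← Finset.sum_neg_distrib]
  refine Finset.sum_congr rfl fun t _ => ?_
  rw [lf_dip (hu _).1 (hu _).2 (hv t).1 (hv t).2]
  have e2 : n - i + t = t + (n - i) := by omega
  rw [e2, mul_comm]
/-! ### the master family and the stored words -/

def isM (m : ℕ) (u : ℕ → ℤ) : Prop :=
  (∃ σ q, u = Xw m σ q) ∨ (∃ σ q, u = Ww m σ q)

lemma isM_Bdd {m : ℕ} {u : ℕ → ℤ} (h : isM m u) : Bdd u := by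
  rcases h with ⟨σ, q, rfl⟩ | ⟨σ, q, rfl⟩
  · exact fun p => ⟨by have := Xw_nonneg m σ q p; omega, Xw_le_one m σ q p⟩
  · exact fun p => ⟨Ww_lb m σ q p, Ww_le_one m σ q p⟩

lemma corr_shift_nonneg {m : ℕ} (hm : 3 ≤ m) {u v : ℕ → ℤ} (hu : isM m u) (hv : isM m v)
    {s : ℕ} (hs : 1 ≤ s) (hs2 : s ≤ nn m) : 0 ≤ corr (nn m) u v s := by
  rcases hu with ⟨σ, q, rfl⟩ | ⟨σ, q, rfl⟩ <;> rcases hv with ⟨σ', q', rfl⟩ | ⟨σ', q', rfl⟩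
  · exact LA m σ σ' q q' s
  · exact LB m hm σ σ' q q' s hs
  · exact LC m hm σ σ' q q' s hs hs2
  · exact LD m hm σ σ' q q' s hs

lemma isM_Rv {m : ℕ} {u : ℕ → ℤ} (hu : isM m u) :
    ∃ w, isM m w ∧ ∀ p, p < nn m → Rv (nn m) u p = w p := by
  rcases hu with ⟨σ, q, rfl⟩ | ⟨σ, q, rfl⟩
  · exact ⟨Xw m (fun i => !σ i) (!q), Or.inl ⟨_, _, rfl⟩, fun p hp => Rv_X m σ q hp⟩
  · exact ⟨Ww m (fun i => !σ i) (!q), Or.inr ⟨_, _, rfl⟩, fun p hp => Rv_W m σ q hp⟩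

/-- bit selector of word index `a` -/
def bsel (a : ℕ) : ℕ → Bool := fun j => (a - 1).testBit (j - 1)

/-- the coded word stored at index `i` -/
def wrd (m : ℕ) (i : ℕ) : ℕ → ℤ :=
  if i % 2 = 1 then Xw m (fun j => !bsel ((i+1)/2) j) false
  else Ww m (bsel (i/2)) true

lemma wrd_odd {m i : ℕ} (h : i % 2 = 1) :
    wrd m i = Xw m (fun j => !bsel ((i+1)/2) j) false := by
  unfold wrd; rw [if_pos h]

lemma wrd_even {m i : ℕ} (h : i % 2 = 0) :
    wrd m i = Ww m (bsel (i/2)) true := by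
  unfold wrd; rw [if_neg (by omega)]

lemma wrd_isM (m i : ℕ) : isM m (wrd m i) := by
  unfold wrd; split_ifs
  · exact Or.inl ⟨_, _, rfl⟩
  · exact Or.inr ⟨_, _, rfl⟩

lemma corr0_pairs (m : ℕ) (hm : 3 ≤ m) (i j : ℕ) :
    0 ≤ corr (nn m) (wrd m i) (wrd m j) 0 := by
  unfold wrd
  split_ifs with h1 h2 h2
  · exact LA m _ _ _ _ 0
  · exact P5 m _ _ false true (by simp)
  · exact P6 m _ _ true false (by simp)
  · exact P3 m _ _ true

lemma bsel_ne {m k a b : ℕ} (hk : k ≤ 2^m) (ha : 1 ≤ a) (ha2 : a ≤ k) (hb : 1 ≤ b)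
    (hb2 : b ≤ k) (hne : a ≠ b) : ∃ i0, 1 ≤ i0 ∧ i0 ≤ m ∧ bsel a i0 ≠ bsel b i0 := by
  by_contra hcon
  push_neg at hcon
  have h1 : a - 1 = b - 1 := by
    apply Nat.eq_of_testBit_eq
    intro j
    by_cases hj : j < m
    · have := hcon (j+1) (by omega) (by omega)
      simpa [bsel] using this
    · have h2 : a - 1 < 2^j :=
        lt_of_lt_of_le (by omega : a - 1 < 2^m) (Nat.pow_le_pow_right (by norm_num) (by omega))
      have h3 : b - 1 < 2^j :=
        lt_of_lt_of_le (by omega : b - 1 < 2^m) (Nat.pow_le_pow_right (by norm_num) (by omega))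
      rw [Nat.testBit_eq_false_of_lt h2, Nat.testBit_eq_false_of_lt h3]
  omega
/-! ### assembly -/

lemma aligned_pairs (m : ℕ) (hm : 3 ≤ m) (i j : ℕ) :
    aligned (listOf (nn m) (wrd m i)) (listOf (nn m) (wrd m j)) := by
  have hui := wrd_isM m i
  have huj := wrd_isM m j
  have hbu := isM_Bdd hui
  have hbv := isM_Bdd huj
  constructor
  · rw [force_full hbu hbv]
    have := corr0_pairs m hm i j
    linarith
  · intro A hA t ht1 ht2
    rw [listOf_length] at ht2
    have hnn : 3 ≤ nn m := by simp only [nn]; omega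
    have hs1 : 1 ≤ nn m - t := by omega
    have hs2 : nn m - t ≤ nn m := by omega
    simp only [List.mem_cons, List.not_mem_nil, or_false] at hA
    rcases hA with rfl | rfl
    · constructor
      · rw [force_take_sufx hbu hbv ht1 (by omega)]
        have := corr_shift_nonneg hm hui huj hs1 hs2
        linarith
      · rw [force_sufx_take hbu hbv ht1 (by omega)]
        have := corr_shift_nonneg hm huj hui hs1 hs2
        linarith
    · rw [reverse_listOf]
      obtain ⟨w, hw, hweq⟩ := isM_Rv huj
      constructor
      · rw [force_take_sufx hbu (Bdd_Rv hbv _) ht1 (by omega)]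
        rw [corr_congr_right _ hweq]
        have := corr_shift_nonneg hm hui hw hs1 hs2
        linarith
      · rw [force_sufx_take hbu (Bdd_Rv hbv _) ht1 (by omega)]
        rw [corr_congr_left _ hweq]
        have := corr_shift_nonneg hm hw hui hs1 hs2
        linarith

lemma encode_pairs (m k : ℕ) (hm : 3 ≤ m) (hk : 2 ≤ k) (hkm : k ≤ 2^m)
    {i j : ℕ} (hi1 : 1 ≤ i) (hi2 : i ≤ 2*k) (hj1 : 1 ≤ j) (hj2 : j ≤ 2*k) :
    (0 < force (listOf (nn m) (wrd m i)) ((listOf (nn m) (wrd m j)).reverse) ↔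
      0 < signedGlue k i j) := by
  rw [reverse_listOf, force_full (isM_Bdd (wrd_isM m i)) (Bdd_Rv (isM_Bdd (wrd_isM m j)) _)]
  rcases Nat.mod_two_eq_zero_or_one i with hpi | hpi <;>
    rcases Nat.mod_two_eq_zero_or_one j with hpj | hpj
  · -- i even, j even
    have hglue : signedGlue k i j = 0 := by
      unfold signedGlue
      rw [if_neg]
      rintro ⟨c, hc, (⟨h1, h2⟩ | ⟨h1, h2⟩)⟩ <;>
        (obtain ⟨hc1, hc2⟩ := Finset.mem_Icc.1 hc; omega)
    have hval : 0 ≤ corr (nn m) (wrd m i) (Rv (nn m) (wrd m j)) 0 := by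
      rw [wrd_even hpi, wrd_even hpj,
        corr_congr_right 0 (fun p hp => Rv_W m (bsel (j/2)) true hp)]
      exact P4 m hm _ _ true false
    rw [hglue]
    exact iff_of_false (by linarith) (by norm_num)
  · -- i even, j odd
    obtain ⟨a, haeq, ha1, ha2⟩ : ∃ a, i = 2*a ∧ 1 ≤ a ∧ a ≤ k := ⟨i/2, by omega, by omega, by omega⟩
    obtain ⟨b, hbeq, hb1, hb2⟩ : ∃ b, j = 2*b-1 ∧ 1 ≤ b ∧ b ≤ k :=
      ⟨(j+1)/2, by omega, by omega, by omega⟩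
    have hrw : corr (nn m) (wrd m i) (Rv (nn m) (wrd m j)) 0
        = corr (nn m) (Xw m (fun t => !bsel b t) false) (Ww m (fun t => !bsel a t) false) 0 := by
      rw [corr0_rev_symm, wrd_odd hpj, wrd_even hpi]
      have e1 : (j+1)/2 = b := by omega
      have e2 : i/2 = a := by omega
      rw [e1, e2, corr_congr_right 0 (fun p hp => Rv_W m (bsel a) true hp)]
      rfl
    by_cases hab : a = b
    · subst hab
      rw [hrw, P1a m _]
      have hglue : signedGlue k i j = 1 := by
        unfold signedGlue
        rw [if_pos ⟨a, Finset.mem_Icc.2 ⟨ha1, ha2⟩, Or.inr ⟨haeq, hbeq⟩⟩]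
      rw [hglue]; norm_num
    · have hval : 0 ≤ corr (nn m) (wrd m i) (Rv (nn m) (wrd m j)) 0 := by
        rw [hrw]
        apply P1b
        obtain ⟨i0, h1, h2, h3⟩ := bsel_ne hkm hb1 hb2 ha1 ha2 (fun h => hab h.symm)
        exact ⟨i0, h1, h2, by simpa using h3⟩
      have hglue : signedGlue k i j = 0 := by
        unfold signedGlue
        rw [if_neg]
        rintro ⟨c, hc, (⟨h1, h2⟩ | ⟨h1, h2⟩)⟩ <;>
          (obtain ⟨hc1, hc2⟩ := Finset.mem_Icc.1 hc; omega)
      rw [hglue]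
      exact iff_of_false (by linarith) (by norm_num)
  · -- i odd, j even
    obtain ⟨a, haeq, ha1, ha2⟩ : ∃ a, i = 2*a-1 ∧ 1 ≤ a ∧ a ≤ k :=
      ⟨(i+1)/2, by omega, by omega, by omega⟩
    obtain ⟨b, hbeq, hb1, hb2⟩ : ∃ b, j = 2*b ∧ 1 ≤ b ∧ b ≤ k := ⟨j/2, by omega, by omega, by omega⟩
    have hrw : corr (nn m) (wrd m i) (Rv (nn m) (wrd m j)) 0
        = corr (nn m) (Xw m (fun t => !bsel a t) false) (Ww m (fun t => !bsel b t) false) 0 := by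
      rw [wrd_odd hpi, wrd_even hpj]
      have e1 : (i+1)/2 = a := by omega
      have e2 : j/2 = b := by omega
      rw [e1, e2, corr_congr_right 0 (fun p hp => Rv_W m (bsel b) true hp)]
      rfl
    by_cases hab : a = b
    · subst hab
      rw [hrw, P1a m _]
      have hglue : signedGlue k i j = 1 := by
        unfold signedGlue
        rw [if_pos ⟨a, Finset.mem_Icc.2 ⟨ha1, ha2⟩, Or.inl ⟨haeq, hbeq⟩⟩]
      rw [hglue]; norm_num
    · have hval : 0 ≤ corr (nn m) (wrd m i) (Rv (nn m) (wrd m j)) 0 := by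
        rw [hrw]
        apply P1b
        obtain ⟨i0, h1, h2, h3⟩ := bsel_ne hkm ha1 ha2 hb1 hb2 hab
        exact ⟨i0, h1, h2, by simpa using h3⟩
      have hglue : signedGlue k i j = 0 := by
        unfold signedGlue
        rw [if_neg]
        rintro ⟨c, hc, (⟨h1, h2⟩ | ⟨h1, h2⟩)⟩ <;>
          (obtain ⟨hc1, hc2⟩ := Finset.mem_Icc.1 hc; omega)
      rw [hglue]
      exact iff_of_false (by linarith) (by norm_num)
  · -- i odd, j odd
    have hglue : signedGlue k i j = 0 := by
      unfold signedGlue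
      rw [if_neg]
      rintro ⟨c, hc, (⟨h1, h2⟩ | ⟨h1, h2⟩)⟩ <;>
        (obtain ⟨hc1, hc2⟩ := Finset.mem_Icc.1 hc; omega)
    have hval : 0 ≤ corr (nn m) (wrd m i) (Rv (nn m) (wrd m j)) 0 := by
      rw [wrd_odd hpi, wrd_odd hpj,
        corr_congr_right 0 (fun p hp => Rv_X m (fun t => !bsel ((j+1)/2) t) false hp)]
      exact LA m _ _ _ _ 0
    rw [hglue]
    exact iff_of_false (by linarith) (by norm_num)

end SA

theorem stmt7' :
    ∃ c : ℝ, 0 < c ∧ ∀ k : ℕ, 2 ≤ k →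
      ∃ (l : ℕ) (W : ℕ → List Dip),
        (l : ℝ) ≤ c * Real.logb 2 k ∧
        (∀ i ∈ Finset.Icc 1 (2 * k), (W i).length = l) ∧
        attEncodes (2 * k) W (signedGlue k) := by
  classical
  refine ⟨113, by norm_num, ?_⟩
  intro k hk
  set mv := max 3 (Nat.clog 2 k) with hmv
  have hm : 3 ≤ mv := le_max_left _ _
  have hkm : k ≤ 2^mv :=
    le_trans (Nat.le_pow_clog (by norm_num) k)
      (Nat.pow_le_pow_right (by norm_num) (le_max_right _ _))
  refine ⟨SA.nn mv, fun i => SA.listOf (SA.nn mv) (SA.wrd mv i), ?_, ?_, ?_, ?_⟩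
  · -- length bound
    have hk0 : (0:ℝ) < (k:ℝ) := by exact_mod_cast (by omega : 0 < k)
    have hlogb1 : (1:ℝ) ≤ Real.logb 2 k := by
      have h2 : Real.logb 2 2 ≤ Real.logb 2 k :=
        Real.logb_le_logb_of_le (by norm_num) (by norm_num) (by exact_mod_cast hk)
      rwa [Real.logb_self_eq_one (by norm_num)] at h2
    have hc1 : 1 ≤ Nat.clog 2 k := by
      by_contra h
      push_neg at h
      have h0 : Nat.clog 2 k = 0 := by omega
      have h1 := Nat.le_pow_clog (show 1 < 2 by norm_num) k
      rw [h0, pow_zero] at h1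
      omega
    have hpow : 2 ^ (Nat.clog 2 k - 1) < k :=
      Nat.pow_pred_clog_lt_self (by norm_num) (by omega)
    have hlt : ((Nat.clog 2 k - 1 : ℕ) : ℝ) < Real.logb 2 k := by
      rw [Real.lt_logb_iff_rpow_lt (by norm_num) hk0, Real.rpow_natCast]
      exact_mod_cast hpow
    have hclogR : ((Nat.clog 2 k : ℕ) : ℝ) ≤ Real.logb 2 k + 1 := by
      have hnat : Nat.clog 2 k = (Nat.clog 2 k - 1) + 1 := by omega
      rw [hnat]
      push_cast
      linarith
    have hmu : (mv:ℝ) ≤ Real.logb 2 k + 4 := by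
      have h1 : mv ≤ Nat.clog 2 k + 3 := max_le (by omega) (by omega)
      have h2 : (mv:ℝ) ≤ (Nat.clog 2 k : ℝ) + 3 := by exact_mod_cast h1
      linarith
    have hnv : (SA.nn mv : ℝ) = 16*(mv:ℝ) + 33 := by
      simp only [SA.nn]
      push_cast
      ring
    rw [hnv]
    linarith
  · intro i _
    exact SA.listOf_length _ _
  · intro i _ j _
    exact SA.aligned_pairs mv hm i j
  · intro i hi j hj
    obtain ⟨hi1, hi2⟩ := Finset.mem_Icc.1 hi
    obtain ⟨hj1, hj2⟩ := Finset.mem_Icc.1 hj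
    exact SA.encode_pairs mv k hm hk hkm hi1 hi2 hj1 hj2

/-- There is a constant `c > 0` such that for every `k ≥ 2` there is a set of `2k` dipole
words of common length at most `c·log₂ k` that attractively encodes the canonical signed
`2k`-glue function. -/
theorem stmt7 :
    ∃ c : ℝ, 0 < c ∧ ∀ k : ℕ, 2 ≤ k →
      ∃ (l : ℕ) (W : ℕ → List Dip),
        (l : ℝ) ≤ c * Real.logb 2 k ∧
        (∀ i ∈ Finset.Icc 1 (2 * k), (W i).length = l) ∧
        attEncodes (2 * k) W (signedGlue k) :=
  stmt7'
end

section
/- Let k be a positive integer and let W_1, …, W_{2k} be the dipole words defined by W_{2a−1} = ⋄^{2k+5} 1 1 (⋄1)^{a−1} (1⋄) (⋄1)^{k−a} 1 ⋄^{2k+6} and W_{2a} = 1^{2k+6} 0 (⋄⋄)^{k−a} (1⋄) (⋄⋄)^{a−1} ⋄ ⋄ 1^{2k+5} for a ∈ {1,…,k}. Then for all a, b ∈ {1,…,k}, f(W_{2a−1}, Rev(W_{2b})) = 1 if a = b, and f(W_{2a−1}, Rev(W_{2b})) = 0 if a ≠ b. -/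
open Dip

/-- `n` repetitions of a letter. -/
def rep (n : ℕ) (x : Dip) : List Dip := List.replicate n x

/-- `n` repetitions of a word. -/
def rep2 (n : ℕ) (p : List Dip) : List Dip := (List.replicate n p).flatten

/-- `W_{2a-1} = ⋄^{2k+5} 1 1 (⋄1)^{a-1} (1⋄) (⋄1)^{k-a} 1 ⋄^{2k+6}`. -/
def Wodd (k a : ℕ) : List Dip :=
  rep (2 * k + 5) blank ++ [one, one] ++ rep2 (a - 1) [blank, one] ++ [one, blank] ++
    rep2 (k - a) [blank, one] ++ [one] ++ rep (2 * k + 6) blank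

/-- `W_{2a} = 1^{2k+6} 0 (⋄⋄)^{k-a} (1⋄) (⋄⋄)^{a-1} ⋄ ⋄ 1^{2k+5}`. -/
def Weven (k a : ℕ) : List Dip :=
  rep (2 * k + 6) one ++ [zero] ++ rep2 (k - a) [blank, blank] ++ [one, blank] ++
    rep2 (a - 1) [blank, blank] ++ [blank, blank] ++ rep (2 * k + 5) one

lemma force_append {X1 X2 Y1 Y2 : List Dip} (h : X1.length = Y1.length) :
    force (X1 ++ X2) (Y1 ++ Y2) = force X1 Y1 + force X2 Y2 := by
  unfold force
  rw [List.zipWith_append h, List.sum_append]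

lemma lf_blank_right (x : Dip) : lf x blank = 0 := by cases x <;> rfl
lemma lf_blank_left (y : Dip) : lf blank y = 0 := by cases y <;> rfl

lemma force_blank_left (n : ℕ) (Y : List Dip) : force (rep n blank) Y = 0 := by
  induction n generalizing Y with
  | zero => simp [force, rep]
  | succ n ih =>
    cases Y with
    | nil => simp [force]
    | cons y Y =>
      rw [rep, List.replicate_succ]
      show force (blank :: rep n blank) (y :: Y) = 0
      unfold force
      rw [List.zipWith_cons_cons, List.sum_cons, lf_blank_left]
      simpa [force] using ih Y

lemma force_blank_right (X : List Dip) (n : ℕ) : force X (rep n blank) = 0 := by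
  induction n generalizing X with
  | zero => simp [force, rep]
  | succ n ih =>
    cases X with
    | nil => simp [force]
    | cons x X =>
      rw [rep, List.replicate_succ]
      show force (x :: X) (blank :: rep n blank) = 0
      unfold force
      rw [List.zipWith_cons_cons, List.sum_cons, lf_blank_right]
      simpa [force] using ih X

lemma rep2_add (m n : ℕ) (p : List Dip) : rep2 (m + n) p = rep2 m p ++ rep2 n p := by
  unfold rep2
  rw [List.replicate_add, List.flatten_append]

lemma rep2_one (p : List Dip) : rep2 1 p = p := by simp [rep2]

lemma length_rep2 (n : ℕ) (p : List Dip) : (rep2 n p).length = n * p.length := by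
  induction n with
  | zero => simp [rep2]
  | succ n ih => rw [show n + 1 = 1 + n by omega, rep2_add, rep2_one]; simp [ih]; ring

lemma length_rep (n : ℕ) (x : Dip) : (rep n x).length = n := by simp [rep]

lemma force_rep2 (n : ℕ) (p q : List Dip) (h : p.length = q.length) :
    force (rep2 n p) (rep2 n q) = n * force p q := by
  induction n with
  | zero => simp [rep2, force]
  | succ n ih =>
    rw [show n + 1 = 1 + n by omega, rep2_add, rep2_add, rep2_one, rep2_one,
      force_append h, ih]
    push_cast
    ring

lemma rev_rep2 (n : ℕ) (x y : Dip) : (rep2 n [x, y]).reverse = rep2 n [y, x] := by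
  induction n with
  | zero => simp [rep2]
  | succ n ih =>
    rw [show n + 1 = 1 + n by omega, rep2_add, rep2_one, List.reverse_append, ih,
      show (1 : ℕ) + n = n + 1 by omega, rep2_add, rep2_one]
    rfl

lemma rev_rep (n : ℕ) (x : Dip) : (rep n x).reverse = rep n x := by
  simp [rep, List.reverse_replicate]

lemma weven_rev (k b : ℕ) : (Weven k b).reverse =
    rep (2 * k + 5) one ++ ([blank, blank] ++ (rep2 (b - 1) [blank, blank] ++
      ([blank, one] ++ (rep2 (k - b) [blank, blank] ++ ([zero] ++ rep (2 * k + 6) one))))) := by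
  unfold Weven
  simp [List.reverse_append, rev_rep2, rev_rep]

lemma case_eq (k a : ℕ) : force (Wodd k a) ((Weven k a).reverse) = 1 := by
  rw [weven_rev]
  unfold Wodd
  simp only [List.append_assoc]
  rw [force_append (by simp [length_rep]),
      force_append (by rfl),
      force_append (by simp [length_rep2]),
      force_append (by rfl),
      force_append (by simp [length_rep2]),
      force_append (by rfl)]
  rw [force_blank_left, force_rep2 _ _ _ (by rfl), force_rep2 _ _ _ (by rfl),
      force_blank_left]
  norm_num [force, lf]

lemma case_lt (a' c d : ℕ) :
    force (Wodd (a' + c + d + 2) (a' + 1)) ((Weven (a' + c + d + 2) (a' + c + 2)).reverse) = 0 := by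
  rw [weven_rev]
  unfold Wodd
  rw [show a' + 1 - 1 = a' by omega,
      show a' + c + d + 2 - (a' + 1) = c + (1 + d) by omega,
      show a' + c + 2 - 1 = a' + (1 + c) by omega,
      show a' + c + d + 2 - (a' + c + 2) = d by omega,
      rep2_add c (1 + d), rep2_add 1 d, rep2_one,
      rep2_add a' (1 + c), rep2_add 1 c, rep2_one]
  simp only [List.append_assoc]
  rw [force_append (by simp [length_rep]),
      force_append (by rfl),
      force_append (by simp [length_rep2]),
      force_append (by rfl),
      force_append (by simp [length_rep2]),
      force_append (by rfl),
      force_append (by simp [length_rep2]),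
      force_append (by rfl)]
  rw [force_blank_left, force_rep2 _ _ _ (by rfl), force_rep2 _ _ _ (by rfl),
      force_rep2 _ _ _ (by rfl), force_blank_left]
  norm_num [force, lf]

lemma case_gt (b' c d : ℕ) :
    force (Wodd (b' + c + d + 2) (b' + c + 2)) ((Weven (b' + c + d + 2) (b' + 1)).reverse) = 0 := by
  rw [weven_rev]
  unfold Wodd
  rw [show b' + c + 2 - 1 = b' + (1 + c) by omega,
      show b' + c + d + 2 - (b' + c + 2) = d by omega,
      show b' + 1 - 1 = b' by omega,
      show b' + c + d + 2 - (b' + 1) = c + (1 + d) by omega,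
      rep2_add b' (1 + c), rep2_add 1 c, rep2_one,
      rep2_add c (1 + d), rep2_add 1 d, rep2_one]
  simp only [List.append_assoc]
  rw [force_append (by simp [length_rep]),
      force_append (by rfl),
      force_append (by simp [length_rep2]),
      force_append (by rfl),
      force_append (by simp [length_rep2]),
      force_append (by rfl),
      force_append (by simp [length_rep2]),
      force_append (by rfl)]
  rw [force_blank_left, force_rep2 _ _ _ (by rfl), force_rep2 _ _ _ (by rfl),
      force_rep2 _ _ _ (by rfl), force_blank_left]
  norm_num [force, lf]

/-- Force between the warmup words: `f(W_{2a-1}, Rev(W_{2b})) = 1` if `a = b` and `0`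
otherwise. -/
theorem stmt8 (k : ℕ) (hk : 0 < k) :
    ∀ a ∈ Finset.Icc 1 k, ∀ b ∈ Finset.Icc 1 k,
      force (Wodd k a) ((Weven k b).reverse) = if a = b then 1 else 0 := by
  intro a ha b hb
  simp only [Finset.mem_Icc] at ha hb
  rcases lt_trichotomy a b with h | h | h
  · rw [if_neg (by omega)]
    obtain ⟨a', c, d, h1, h2, h3⟩ : ∃ a' c d, a = a' + 1 ∧ b = a' + c + 2 ∧ k = a' + c + d + 2 :=
      ⟨a - 1, b - a - 1, k - b, by omega, by omega, by omega⟩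
    subst h1; subst h2; subst h3
    exact case_lt _ _ _
  · subst h
    rw [if_pos rfl]
    exact case_eq k a
  · rw [if_neg (by omega)]
    obtain ⟨b', c, d, h1, h2, h3⟩ : ∃ b' c d, b = b' + 1 ∧ a = b' + c + 2 ∧ k = b' + c + d + 2 :=
      ⟨b - 1, a - b - 1, k - a, by omega, by omega, by omega⟩
    subst h1; subst h2; subst h3
    exact case_gt _ _ _
end

section
/- Let g be a k-glue function and let g′ be the 2k-glue function defined by g′(i,j) = g(i, j−k) if i ≤ k < j, g′(i,j) = g(i−k, j) if j ≤ k < i, and g′(i,j) = 0 otherwise (so the bond graph of g′ is bipartite). Suppose W_1, …, W_{2k} are dipole words of common length L such that for all i, j ∈ {1,…,2k}, f(W_i, Rev(W_j)) > 0 if and only if g′(i,j) > 0. Define V_i = W_i ⋄^L W_{i+k} for i ∈ {1,…,k} (each of length 3L). Then for all i, j ∈ {1,…,k}, f(V_i, Rev(V_j)) > 0 if and only if g(i,j) > 0. -/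
open Dip

/-- The bipartite `2k`-glue function `g'` obtained from the `k`-glue function `g`. -/
def gPrime (g : ℕ → ℕ → ℤ) (k : ℕ) (i j : ℕ) : ℤ :=
  if i ≤ k ∧ k < j then g i (j - k)
  else if j ≤ k ∧ k < i then g (i - k) j
  else 0


lemma force_append_s19 (X Y Z T : List Dip) (h : X.length = Z.length) :
    force (X ++ Y) (Z ++ T) = force X Z + force Y T := by
  simp [force, List.zipWith_append h]

lemma force_blank (L : ℕ) :
    force (List.replicate L Dip.blank) (List.replicate L Dip.blank) = 0 := by
  induction L with
  | zero => rfl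
  | succ n ih => simpa [force, List.replicate_succ, lf] using ih

/-- Concatenating the signed pairs `Wᵢ ⋄^L W_{i+k}` turns an attraction pattern for `g'`
into one for `g`. -/
theorem stmt19 (k : ℕ) (hk : 0 < k) (g : ℕ → ℕ → ℤ)
    (hsym : ∀ i ∈ Finset.Icc 1 k, ∀ j ∈ Finset.Icc 1 k, g i j = g j i)
    (L : ℕ) (W : ℕ → List Dip)
    (hlen : ∀ i ∈ Finset.Icc 1 (2 * k), (W i).length = L)
    (henc : ∀ i ∈ Finset.Icc 1 (2 * k), ∀ j ∈ Finset.Icc 1 (2 * k),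
      (0 < force (W i) ((W j).reverse) ↔ 0 < gPrime g k i j)) :
    ∀ i ∈ Finset.Icc 1 k, ∀ j ∈ Finset.Icc 1 k,
      (0 < force (W i ++ List.replicate L Dip.blank ++ W (i + k))
          ((W j ++ List.replicate L Dip.blank ++ W (j + k)).reverse) ↔ 0 < g i j) := by
  intro i hi j hj
  simp only [Finset.mem_Icc] at hi hj
  have hi2 : i ∈ Finset.Icc 1 (2*k) := by simp [Finset.mem_Icc]; omega
  have hik2 : i + k ∈ Finset.Icc 1 (2*k) := by simp [Finset.mem_Icc]; omega
  have hj2 : j ∈ Finset.Icc 1 (2*k) := by simp [Finset.mem_Icc]; omega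
  have hjk2 : j + k ∈ Finset.Icc 1 (2*k) := by simp [Finset.mem_Icc]; omega
  have h1 := henc i hi2 (j+k) hjk2
  have h2 := henc (i+k) hik2 j hj2
  have e1 : gPrime g k i (j+k) = g i j := by
    unfold gPrime
    rw [if_pos ⟨hi.2, by omega⟩]
    congr 1; omega
  have e2 : gPrime g k (i+k) j = g i j := by
    unfold gPrime
    rw [if_neg (by omega), if_pos ⟨hj.2, by omega⟩]
    congr 1; omega
  rw [e1] at h1; rw [e2] at h2
  have hrev : (W j ++ List.replicate L Dip.blank ++ W (j + k)).reverse
      = (W (j+k)).reverse ++ List.replicate L Dip.blank ++ (W j).reverse := by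
    simp [List.reverse_append]
  rw [hrev]
  have lb : (List.replicate L Dip.blank).length = L := by simp
  rw [force_append_s19 _ _ _ _ (by rw [List.length_append, List.length_append]; simp [hlen i hi2, hlen (j+k) hjk2]),
      force_append_s19 _ _ _ _ (by simp [hlen i hi2, hlen (j+k) hjk2]), force_blank]
  constructor
  · intro h
    by_contra hg
    push_neg at hg
    have := (not_iff_not.mpr h1).mpr (by omega)
    have := (not_iff_not.mpr h2).mpr (by omega)
    omega
  · intro h
    have := h1.mpr h
    have := h2.mpr h
    omega
end
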